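/- arXiv:1701.07206 — 8 statements merged into one kernel-verified Lean document; each statement's English description precedes it below -/
import Mathlib

section
/- Let q be a prime power, s ≥ 2, and d an integer with 0 ≤ d ≤ q−1. Let P, Q ∈ 𝔽_q[x_1,…,x_s] be homogeneous polynomials of degree d, and let A_1,…,A_{s−1} ⊆ 𝔽_q be subsets with |A_i| = d+1 for each i. If P(a) = Q(a) for every point a in the set A = A_1 × ⋯ × A_{s−1} × {1}, then P(w) = Q(w) for every w ∈ 𝔽_q^s; that is, A is an interpolation set for homogeneous polynomials of degree d. -/
open MvPolynomial

/-- A multivariate polynomial over a field that vanishes on a grid `A 0 × ⋯ × A (n-1)` with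
`degreeOf i p < (A i).card` for every `i` must be the zero polynomial. -/
lemma grid_vanish_aux {F : Type*} [Field F] :
    ∀ (n : ℕ) (p : MvPolynomial (Fin n) F) (A : Fin n → Finset F),
      (∀ i, p.degreeOf i < (A i).card) →
      (∀ a : Fin n → F, (∀ i, a i ∈ A i) → eval a p = 0) → p = 0 := by
  intro n
  induction n with
  | zero =>
    intro p A _ hvan
    obtain ⟨c, rfl⟩ := MvPolynomial.C_surjective (Fin 0) p
    have := hvan (fun i => i.elim0) (fun i => i.elim0)
    simpa using this
  | succ n ih =>
    intro p A hdeg hvan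
    have key : ∀ (b : Fin n → F), (∀ j, b j ∈ A j.succ) →
        Polynomial.map (eval b) (finSuccEquiv F n p) = 0 := by
      intro b hb
      apply Polynomial.eq_zero_of_natDegree_lt_card_of_eval_eq_zero' _ (A 0)
      · intro y hy
        rw [← eval_eq_eval_mv_eval']
        refine hvan (Fin.cons y b) ?_
        intro i
        refine Fin.cases ?_ ?_ i
        · simpa using hy
        · intro j; simpa using hb j
      · calc (Polynomial.map (eval b) (finSuccEquiv F n p)).natDegree
            ≤ (finSuccEquiv F n p).natDegree := Polynomial.natDegree_map_le
          _ = p.degreeOf 0 := natDegree_finSuccEquiv p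
          _ < (A 0).card := hdeg 0
    have hcoeff : ∀ k : ℕ, (finSuccEquiv F n p).coeff k = 0 := by
      intro k
      refine ih _ (fun j => A j.succ) ?_ ?_
      · intro j
        exact lt_of_le_of_lt (degreeOf_coeff_finSuccEquiv p j k) (hdeg j.succ)
      · intro b hb
        have := congrArg (fun q => Polynomial.coeff q k) (key b hb)
        simpa [Polynomial.coeff_map] using this
    have : finSuccEquiv F n p = 0 := Polynomial.ext (by simpa using hcoeff)
    exact (map_eq_zero_iff _ (finSuccEquiv F n).injective).mp this

/-- Let `q` be a prime power (realized as the cardinality of a finite field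
`F`), `s ≥ 2`, and `0 ≤ d ≤ q - 1`.  If two homogeneous polynomials of degree `d` in `s`
variables over `F` agree on the set `A = A_1 × ⋯ × A_{s-1} × {1}`, where each `A_i ⊆ F` has
size `d + 1`, then they agree on all of `F^s`; i.e. `A` is an interpolation set for
homogeneous polynomials of degree `d`. -/
theorem stmt0 {F : Type*} [Field F] [Fintype F] (q s d : ℕ)
    (hcard : Fintype.card F = q) (hs : 2 ≤ s) (hd : d ≤ q - 1)
    (P Q : MvPolynomial (Fin s) F)
    (hP : P.IsHomogeneous d) (hQ : Q.IsHomogeneous d)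
    (A : Fin s → Finset F) (hA : ∀ i : Fin s, (i : ℕ) < s - 1 → (A i).card = d + 1)
    (hagree : ∀ a : Fin s → F,
      (∀ i : Fin s, (i : ℕ) < s - 1 → a i ∈ A i) →
      a ⟨s - 1, by omega⟩ = 1 →
      eval a P = eval a Q) :
    ∀ w : Fin s → F, eval w P = eval w Q := by
  classical
  set last : Fin s := ⟨s - 1, by omega⟩ with hlastdef
  set R : MvPolynomial (Fin s) F := P - Q with hRdef
  have hR : R.IsHomogeneous d := hP.sub hQ
  -- degree of exponents in the support of R
  have hRsupp : ∀ n ∈ R.support, Finsupp.degree n = d := by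
    intro n hn
    have := hR (mem_support_iff.mp hn)
    rw [Finsupp.degree_eq_weight_one]; exact this
  have hvan : ∀ a : Fin s → F, (∀ i : Fin s, (i : ℕ) < s - 1 → a i ∈ A i) →
      a last = 1 → eval a R = 0 := by
    intro a h1 h2
    simp only [hRdef, map_sub, sub_eq_zero]
    exact hagree a h1 h2
  -- substitute the last variable by 1
  set g : Fin s → MvPolynomial (Fin s) F := fun i => if i = last then 1 else X i with hgdef
  set T : MvPolynomial (Fin s) F := bind₁ g R with hTdef
  have hTsum : T = ∑ n ∈ R.support, monomial (n.erase last) (R.coeff n) := by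
    rw [hTdef]
    conv_lhs => rw [R.as_sum]
    rw [map_sum]
    refine Finset.sum_congr rfl fun n _ => ?_
    rw [bind₁_monomial]
    have hprod : (∏ i ∈ n.support, g i ^ n i) = monomial (n.erase last) (1 : F) := by
      rw [monomial_eq, C_1, one_mul, Finsupp.prod, Finsupp.support_erase]
      rw [← Finset.prod_erase n.support (by simp [hgdef] : g last ^ n last = 1)]
      refine Finset.prod_congr rfl fun i hi => ?_
      have hne : i ≠ last := Finset.ne_of_mem_erase hi
      simp [hgdef, hne, Finsupp.erase_apply]
    rw [hprod, C_mul_monomial, mul_one]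
  -- members of the support of T
  have hTsupp : ∀ m ∈ T.support, ∃ n ∈ R.support, m = n.erase last := by
    intro m hm
    have hne : T.coeff m ≠ 0 := mem_support_iff.mp hm
    rw [hTsum, coeff_sum] at hne
    obtain ⟨n, hn, hcn⟩ := Finset.exists_ne_zero_of_sum_ne_zero hne
    rw [coeff_monomial] at hcn
    by_cases h : n.erase last = m
    · exact ⟨n, hn, h.symm⟩
    · simp [h] at hcn
  -- the modified grid
  set A' : Fin s → Finset F := fun i => if (i : ℕ) < s - 1 then A i else {1} with hA'def
  have hT0 : T = 0 := by
    refine grid_vanish_aux s T A' ?_ ?_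
    · intro i
      have hpos : 0 < (A' i).card := by
        by_cases h : (i : ℕ) < s - 1 <;> simp [hA'def, h, hA i]
      rw [degreeOf_lt_iff hpos]
      intro m hm
      obtain ⟨n, hn, rfl⟩ := hTsupp m hm
      by_cases h : (i : ℕ) < s - 1
      · have hine : i ≠ last := by
          intro he; rw [he] at h; simp [hlastdef] at h
        have : (n.erase last) i = n i := Finsupp.erase_ne hine
        rw [this]
        have hle : n i ≤ d := by
          have := Finsupp.le_degree i n
          rw [hRsupp n hn] at this; exact this
        simpa [hA'def, h, hA i h] using lt_of_le_of_lt hle (Nat.lt_succ_self d)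
      · have hieq : i = last := by
          apply Fin.ext
          have : (i : ℕ) ≤ s - 1 := by omega
          simp [hlastdef]; omega
        simp [hA'def, h, hieq, hlastdef, Finsupp.erase_same]
    · intro a ha
      have halast : a last = 1 := by
        have := ha last
        simpa [hA'def, hlastdef] using this
      have heval : eval a T = eval (fun i => eval a (g i)) R := by
        rw [hTdef]
        exact eval₂Hom_bind₁ _ _ _ _
      have hfun : (fun i => eval a (g i)) = a := by
        funext i
        by_cases h : i = last
        · simp [hgdef, h, halast]
        · simp [hgdef, h]
      rw [heval, hfun]
      refine hvan a ?_ halast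
      intro i hi
      have := ha i
      simpa [hA'def, hi] using this
  -- deduce R = 0 from T = 0 by comparing coefficients
  have hR0 : R = 0 := by
    ext m
    rw [coeff_zero]
    by_cases hm : m ∈ R.support
    · have h1 : T.coeff (m.erase last) = R.coeff m := by
        rw [hTsum, coeff_sum]
        rw [Finset.sum_eq_single m]
        · simp [coeff_monomial]
        · intro n hn hne
          rw [coeff_monomial, if_neg]
          intro he
          apply hne
          -- n and m are both of degree d and have equal erasures, hence equal
          have hdn : Finsupp.degree n = d := hRsupp n hn
          have hdm : Finsupp.degree m = d := hRsupp m hm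
          have hdeg_split : ∀ (k : Fin s →₀ ℕ),
              Finsupp.degree k = k last + Finsupp.degree (k.erase last) := by
            intro k
            conv_lhs => rw [← Finsupp.single_add_erase last k]
            rw [Finsupp.degree_eq_weight_one, map_add, ← Finsupp.degree_eq_weight_one]
            congr 1
            rw [Finsupp.degree_eq_weight_one, Finsupp.weight_apply,
              Finsupp.sum_single_index] <;> simp
          have hlasteq : n last = m last := by
            have h1 := hdeg_split n
            have h2 := hdeg_split m
            rw [hdn] at h1; rw [hdm] at h2
            rw [he] at h1
            omega
          ext i
          by_cases h : i = last
          · rw [h]; exact hlasteq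
          · have e1 : (n.erase last) i = n i := Finsupp.erase_ne h
            have e2 : (m.erase last) i = m i := Finsupp.erase_ne h
            rw [← e1, ← e2, he]
        · intro h; exact absurd hm h
      rw [hT0, coeff_zero] at h1
      exact h1.symm
    · simpa using mem_support_iff.not.mp hm
  intro w
  have : eval w R = 0 := by rw [hR0]; simp
  rw [hRdef, map_sub, sub_eq_zero] at this
  exact this
end

section
/- Let q be a prime power, s ≥ 2, and d an integer with 0 ≤ d ≤ q−1, and set K = ⌊q/(d+1)⌋^{s−1}. Then there exist K subsets A^{(1)},…,A^{(K)} ⊆ 𝔽_q^s, each of size (d+1)^{s−1}, such that: (a) each A^{(j)} is an interpolation set for homogeneous polynomials of degree d, i.e., any two homogeneous polynomials of degree d over 𝔽_q in s variables that agree on A^{(j)} agree on all of 𝔽_q^s; and (b) the sets are mutually disjoint under multiplication, i.e., for all j ≠ j', every u ∈ A^{(j)} and every α ∈ 𝔽_q ∖ {0}, the point α·u does not belong to A^{(j')}. -/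
open MvPolynomial

/-- A multivariate polynomial vanishing on a grid with sides larger than its
partial degrees is zero. -/
lemma grid_zero {F : Type*} [Field F] : ∀ {n : ℕ} (p : MvPolynomial (Fin n) F)
    (C : Fin n → Finset F), (∀ i, degreeOf i p < (C i).card) →
    (∀ t : Fin n → F, (∀ i, t i ∈ C i) → eval t p = 0) → p = 0 := by
  intro n
  induction n with
  | zero =>
    intro p C _ hvan
    have h0 := hvan (fun i => i.elim0) (fun i => i.elim0)
    rw [eq_C_of_isEmpty p] at h0 ⊢
    simpa using h0
  | succ n IH =>
    intro p C hdeg hvan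
    have key : ∀ k, (finSuccEquiv F n p).coeff k = 0 := by
      intro k
      apply IH _ (fun j => C j.succ)
      · intro j
        exact lt_of_le_of_lt (degreeOf_coeff_finSuccEquiv p j k) (hdeg j.succ)
      · intro t ht
        have hphi : (Polynomial.map (eval t) (finSuccEquiv F n p)) = 0 := by
          apply Polynomial.eq_zero_of_natDegree_lt_card_of_eval_eq_zero' _ (C 0)
          · intro y hy
            rw [← eval_eq_eval_mv_eval']
            refine hvan (Fin.cons y t) ?_
            intro i
            refine Fin.cases ?_ ?_ i
            · simpa using hy
            · intro i'; simpa using ht i'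
          · calc (Polynomial.map (eval t) (finSuccEquiv F n p)).natDegree
                ≤ (finSuccEquiv F n p).natDegree := Polynomial.natDegree_map_le
              _ = degreeOf 0 p := natDegree_finSuccEquiv p
              _ < (C 0).card := hdeg 0
        have h2 := congrArg (fun q => Polynomial.coeff q k) hphi
        simpa [Polynomial.coeff_map] using h2
    have hfs : finSuccEquiv F n p = 0 := Polynomial.ext (by simpa using key)
    exact (map_eq_zero_iff _ (finSuccEquiv F n).injective).mp hfs

lemma degree_cons {n : ℕ} (k : ℕ) (m : Fin n →₀ ℕ) :
    (Finsupp.cons k m).degree = k + m.degree := by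
  have h : ∀ {N : ℕ} (f : Fin N →₀ ℕ), f.degree = ∑ i, f i := by
    intro N f
    rw [Finsupp.degree]
    exact Finset.sum_subset (Finset.subset_univ _)
      (fun x _ hx => Finsupp.notMem_support_iff.mp hx)
  rw [h, h, Fin.sum_univ_succ]
  simp [Finsupp.cons_zero, Finsupp.cons_succ]

/-- A homogeneous polynomial of degree `d` vanishing on `{1} × grid` (grid with
sides of size `> d`) is the zero polynomial. -/
lemma homog_zero {F : Type*} [Field F] {n d : ℕ} (R : MvPolynomial (Fin (n + 1)) F)
    (hhom : R.IsHomogeneous d) (C : Fin n → Finset F) (hC : ∀ i, d < (C i).card)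
    (hvan : ∀ t : Fin n → F, (∀ i, t i ∈ C i) → eval (Fin.cons 1 t) R = 0) :
    R = 0 := by
  by_contra hR0
  set ψ := finSuccEquiv F n R with hψ
  set S : MvPolynomial (Fin n) F := Polynomial.eval 1 ψ with hS
  have htot : R.totalDegree = d := hhom.totalDegree hR0
  -- S vanishes on the grid
  have hvanS : ∀ t : Fin n → F, (∀ i, t i ∈ C i) → eval t S = 0 := by
    intro t ht
    have := hvan t ht
    rwa [eval_eq_eval_mv_eval', Polynomial.eval_one_map] at this
  -- degrees of S are small
  have hStot : S.totalDegree ≤ d := by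
    have : S = ∑ k ∈ Finset.range (ψ.natDegree + 1), ψ.coeff k := by
      rw [hS, Polynomial.eval_eq_sum_range]
      simp
    rw [this]
    refine totalDegree_finsetSum_le ?_
    intro k _
    by_cases hk : ψ.coeff k = 0
    · simp [hk]
    · have h9 := totalDegree_coeff_finSuccEquiv_add_le R k (by rw [hψ] at hk; exact hk)
      rw [← hψ, htot] at h9
      omega
  have hSz : S = 0 := by
    refine grid_zero S C (fun i => lt_of_le_of_lt ?_ (hC i)) hvanS
    exact le_trans (degreeOf_le_totalDegree S i) hStot
  -- now derive a contradiction from a nonzero coefficient of R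
  obtain ⟨a, ha⟩ := (support_nonempty.mpr hR0)
  have hac : coeff a R ≠ 0 := mem_support_iff.mp ha
  set k0 := a 0 with hk0
  set m0 := Finsupp.tail a with hm0
  have hconsa : Finsupp.cons k0 m0 = a := Finsupp.cons_tail a
  have hdega : a.degree = d := by
    by_contra hne
    exact hac (hhom.coeff_eq_zero hne)
  have hψk0 : ψ.coeff k0 ≠ 0 := by
    intro h
    have := finSuccEquiv_coeff_coeff m0 R k0
    rw [hconsa] at this
    rw [← hψ] at this
    rw [h] at this
    simp at this
    exact hac this.symm
  have hk0le : k0 ≤ ψ.natDegree := Polynomial.le_natDegree_of_ne_zero hψk0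
  have hcm : coeff m0 S = coeff a R := by
    have hSsum : S = ∑ k ∈ Finset.range (ψ.natDegree + 1), ψ.coeff k := by
      rw [hS, Polynomial.eval_eq_sum_range]; simp
    rw [hSsum, coeff_sum]
    rw [Finset.sum_eq_single k0]
    · rw [finSuccEquiv_coeff_coeff m0 R k0, hconsa]
    · intro k _ hk
      have : coeff m0 (ψ.coeff k) = coeff (Finsupp.cons k m0) R :=
        finSuccEquiv_coeff_coeff m0 R k
      rw [this]
      by_contra hnz
      have hdeg : (Finsupp.cons k m0).degree = d := by
        by_contra hne
        exact hnz (hhom.coeff_eq_zero hne)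
      rw [degree_cons] at hdeg
      rw [← hconsa, degree_cons] at hdega
      omega
    · intro h
      exact absurd (Finset.mem_range.mpr (by omega)) h
  rw [hSz] at hcm
  simp at hcm
  exact hac hcm.symm

/-- Let `q` be a prime power (realized as the cardinality of a finite field
`F`), `s ≥ 2`, `0 ≤ d ≤ q - 1`, and `K = ⌊q/(d+1)⌋^(s-1)`.  There exist `K` subsets of `F^s`,
each of size `(d+1)^(s-1)`, each an interpolation set for homogeneous polynomials of degree
`d`, and mutually disjoint under multiplication. -/
theorem stmt1 {F : Type*} [Field F] [Fintype F] (q s d : ℕ)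
    (hcard : Fintype.card F = q) (hs : 2 ≤ s) (hd : d ≤ q - 1) :
    ∃ A : Fin ((q / (d + 1)) ^ (s - 1)) → Finset (Fin s → F),
      (∀ j, (A j).card = (d + 1) ^ (s - 1)) ∧
      (∀ j, ∀ P Q : MvPolynomial (Fin s) F, P.IsHomogeneous d → Q.IsHomogeneous d →
        (∀ a ∈ A j, eval a P = eval a Q) → ∀ w : Fin s → F, eval w P = eval w Q) ∧
      (∀ j j', j ≠ j' → ∀ u ∈ A j, ∀ α : F, α ≠ 0 → α • u ∉ A j') := by
  classical
  obtain ⟨s', rfl⟩ : ∃ s', s = s' + 1 := ⟨s - 1, by omega⟩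
  have hq1 : 1 ≤ q := by rw [← hcard]; exact Fintype.card_pos
  have hdq : d + 1 ≤ q := by omega
  set m := q / (d + 1) with hm
  have hmdq : m * (d + 1) ≤ q := Nat.div_mul_le_self q (d + 1)
  -- an injection from `Fin m × Fin (d+1)` into `F`
  let E : Fin m × Fin (d + 1) ↪ F :=
    (finProdFinEquiv.toEmbedding.trans (Fin.castLEEmb hmdq)).trans
      (Fintype.equivFinOfCardEq hcard).symm.toEmbedding
  -- index sets as functions
  let g : Fin (m ^ s') ≃ (Fin s' → Fin m) := finFunctionFinEquiv.symm
  -- the points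
  let pt : Fin (m ^ s') → (Fin s' → Fin (d + 1)) → (Fin (s' + 1) → F) :=
    fun j y => Fin.cons 1 (fun i => E (g j i, y i))
  have hptinj : ∀ j, Function.Injective (pt j) := by
    intro j y y' h
    funext i
    have := congrFun h i.succ
    simp only [pt, Fin.cons_succ] at this
    exact (Prod.mk.injEq _ _ _ _).mp (E.injective this) |>.2
  refine ⟨fun j => Finset.image (pt j) Finset.univ, ?_, ?_, ?_⟩
  · intro j
    rw [Finset.card_image_of_injective _ (hptinj j)]
    simp
  · -- interpolation
    intro j P Q hP hQ hagree w
    have hsub : (P - Q).IsHomogeneous d := hP.sub hQ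
    set C : Fin s' → Finset F :=
      fun i => Finset.image (fun y : Fin (d + 1) => E (g j i, y)) Finset.univ with hC
    have hCcard : ∀ i, (C i).card = d + 1 := by
      intro i
      rw [Finset.card_image_of_injective _ (fun y y' h =>
        ((Prod.mk.injEq _ _ _ _).mp (E.injective h)).2)]
      simp
    have hz : P - Q = 0 := by
      refine homog_zero (P - Q) hsub C (fun i => by rw [hCcard i]; omega) ?_
      intro t ht
      choose y hy using fun i => Finset.mem_image.mp (ht i)
      have hpt : Fin.cons 1 t = pt j y := by
        funext i
        refine Fin.cases ?_ ?_ i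
        · simp [pt]
        · intro i'
          simp only [pt, Fin.cons_succ]
          exact ((hy i').2).symm
      have hmem : Fin.cons 1 t ∈ Finset.image (pt j) Finset.univ := by
        rw [hpt]; exact Finset.mem_image_of_mem _ (Finset.mem_univ y)
      have := hagree _ hmem
      rw [map_sub, this, sub_self]
    rw [sub_eq_zero.mp hz]
  · -- disjointness under multiplication
    intro j j' hjj u hu α hα hmem
    obtain ⟨y, _, rfl⟩ := Finset.mem_image.mp hu
    obtain ⟨y', _, hy'⟩ := Finset.mem_image.mp hmem
    have h0 := congrFun hy' 0
    simp only [pt, Pi.smul_apply, Fin.cons_zero, smul_eq_mul, mul_one] at h0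
    -- h0 : pt j' y' 0 = α  (or the reverse); α = 1
    have hα1 : α = 1 := by
      exact (by simpa [pt] using h0 : (1:F) = α).symm
    subst hα1
    rw [one_smul] at hy'
    -- now pt j' y' = pt j y, so g j' = g j
    have : g j' = g j := by
      funext i
      have := congrFun hy' i.succ
      simp only [pt, Fin.cons_succ] at this
      exact ((Prod.mk.injEq _ _ _ _).mp (E.injective this)).1
    exact hjj (g.injective this.symm)
end

section
/- Let q be a prime power and m, d, s positive integers with s ≥ 2 and d < m(q−1), and set k = ⌊q/m⌋^{s−1}. Then for every w_0 ∈ 𝔽_q^s there exist k pairwise disjoint subsets R_1,…,R_k of 𝔽_q^s ∖ {w_0} such that for each j ∈ {1,…,k}, any two polynomials P, Q ∈ 𝔽_q[x_1,…,x_s] of total degree at most d satisfying P^{(<m)}(w) = Q^{(<m)}(w) for every w ∈ R_j also satisfy P^{(<m)}(w_0) = Q^{(<m)}(w_0). (That is, every coordinate of the multiplicity code C(m,d,s,q) has k mutually disjoint recovering sets, so C(m,d,s,q) is a k-PIR code.) -/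
open MvPolynomial

/-- The `i`-th Hasse derivative of a multivariate polynomial `P`, i.e. the coefficient of
`z^i` in the expansion of `P(x + z)`. -/
noncomputable def hasseDeriv {F : Type*} [Field F] {s : ℕ}
    (i : Fin s →₀ ℕ) (P : MvPolynomial (Fin s) F) : MvPolynomial (Fin s) F :=
  ∑ m ∈ P.support,
    monomial (m - i) ((∏ j : Fin s, ((m j).choose (i j) : F)) * P.coeff m)

section Aux

variable {F : Type*} [Field F] {s : ℕ}

lemma hasseDeriv_eq_sum_subset (i : Fin s →₀ ℕ) (P : MvPolynomial (Fin s) F)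
    (T : Finset (Fin s →₀ ℕ)) (hT : P.support ⊆ T) :
    hasseDeriv i P = ∑ m ∈ T,
      monomial (m - i) ((∏ j : Fin s, ((m j).choose (i j) : F)) * P.coeff m) := by
  rw [hasseDeriv]
  refine Finset.sum_subset hT (fun x _ hx => ?_)
  rw [notMem_support_iff.mp hx, mul_zero, map_zero]

lemma hasseDeriv_sub (i : Fin s →₀ ℕ) (P Q : MvPolynomial (Fin s) F) :
    hasseDeriv i (P - Q) = hasseDeriv i P - hasseDeriv i Q := by
  classical
  set T := P.support ∪ Q.support ∪ (P - Q).support with hTdef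
  rw [hasseDeriv_eq_sum_subset i P T (by intro x hx; simp [hTdef, hx]),
    hasseDeriv_eq_sum_subset i Q T (by intro x hx; simp [hTdef, hx]),
    hasseDeriv_eq_sum_subset i (P - Q) T (by intro x hx; simp [hTdef, hx]),
    ← Finset.sum_sub_distrib]
  refine Finset.sum_congr rfl (fun m _ => ?_)
  rw [coeff_sub, mul_sub, map_sub]

lemma hasseDeriv_eq_zero (i : Fin s →₀ ℕ) (P : MvPolynomial (Fin s) F)
    (h : ∀ n ∈ P.support, ∃ j, n j < i j) : hasseDeriv i P = 0 := by
  rw [hasseDeriv]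
  refine Finset.sum_eq_zero (fun n hn => ?_)
  obtain ⟨j, hj⟩ := h n hn
  have : ((n j).choose (i j) : F) = 0 := by
    rw [Nat.choose_eq_zero_of_lt hj, Nat.cast_zero]
  rw [Finset.prod_eq_zero (Finset.mem_univ j) this, zero_mul, map_zero]

lemma hasseDeriv_monomial (i n : Fin s →₀ ℕ) (c : F) :
    hasseDeriv i (monomial n c)
      = monomial (n - i) ((∏ j : Fin s, ((n j).choose (i j) : F)) * c) := by
  classical
  rcases eq_or_ne c 0 with rfl | hc
  · rw [map_zero, mul_zero, map_zero, hasseDeriv]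
    simp
  · rw [hasseDeriv, support_monomial, if_neg hc, Finset.sum_singleton, coeff_monomial, if_pos rfl]

lemma taylor_aeval_monomial (A : Type*) [CommRing A] [Algebra F A] (x : Fin s → F) (z : Fin s → A)
    (n N : Fin s →₀ ℕ) (hn : n ≤ N) (c : F) :
    aeval (fun j => algebraMap F A (x j) + z j) (monomial n c)
      = ∑ i ∈ Finset.Iic N,
          algebraMap F A (eval x (hasseDeriv i (monomial n c))) * ∏ j, z j ^ (i j) := by
  classical
  rw [← Finset.sum_subset (Finset.Iic_subset_Iic.mpr hn) ?side]
  case side =>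
    intro i hi hni
    rw [Finset.mem_Iic] at hni
    rw [Finsupp.le_def] at hni
    push_neg at hni
    obtain ⟨j, hj⟩ := hni
    have h0 : ((n j).choose (i j) : F) = 0 := by
      rw [Nat.choose_eq_zero_of_lt hj, Nat.cast_zero]
    rw [hasseDeriv_monomial, Finset.prod_eq_zero (Finset.mem_univ j) h0, zero_mul, map_zero,
      map_zero, map_zero, zero_mul]
  have key : ∀ i ∈ Finset.Iic n,
      algebraMap F A (eval x (hasseDeriv i (monomial n c))) * ∏ j, z j ^ (i j)
      = algebraMap F A c *
          ∏ j, (z j ^ (i j) * (algebraMap F A (x j)) ^ (n j - i j) * ((n j).choose (i j) : A)) := by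
    intro i hi
    rw [hasseDeriv_monomial, eval_monomial, Finsupp.prod_fintype _ _ (fun j => pow_zero _)]
    simp only [Finsupp.tsub_apply]
    rw [map_mul, map_mul, map_prod, Finset.prod_mul_distrib, Finset.prod_mul_distrib, map_prod]
    simp_rw [map_pow, map_natCast]
    ring
  rw [Finset.sum_congr rfl key]
  rw [aeval_monomial, Finsupp.prod_fintype _ _ (fun j => pow_zero _)]
  simp_rw [add_comm (algebraMap F A (x _)) (z _), add_pow, Finset.prod_univ_sum, Finset.mul_sum]
  refine Finset.sum_nbij' (fun κ => Finsupp.equivFunOnFinite.symm κ) (fun i => ⇑i) ?_ ?_ ?_ ?_ ?_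
  · intro κ hκ
    rw [Fintype.mem_piFinset] at hκ
    rw [Finset.mem_Iic, Finsupp.le_def]
    intro j
    simpa [Nat.lt_succ_iff] using hκ j
  · intro i hi
    rw [Finset.mem_Iic, Finsupp.le_def] at hi
    rw [Fintype.mem_piFinset]
    intro j
    simpa [Nat.lt_succ_iff] using hi j
  · intro κ hκ
    rfl
  · intro i hi
    exact Finsupp.equivFunOnFinite_symm_coe i
  · intro κ hκ
    rfl

lemma taylor_aeval (A : Type*) [CommRing A] [Algebra F A] (x : Fin s → F) (z : Fin s → A)
    (P : MvPolynomial (Fin s) F) (N : Fin s →₀ ℕ) (hN : ∀ n ∈ P.support, n ≤ N) :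
    aeval (fun j => algebraMap F A (x j) + z j) P
      = ∑ i ∈ Finset.Iic N, algebraMap F A (eval x (hasseDeriv i P)) * ∏ j, z j ^ (i j) := by
  conv_lhs => rw [P.as_sum, map_sum]
  rw [Finset.sum_congr rfl (fun n hn => taylor_aeval_monomial A x z n N (hN n hn) (coeff n P)),
    Finset.sum_comm]
  refine Finset.sum_congr rfl (fun i _ => ?_)
  rw [← Finset.sum_mul, ← map_sum, ← map_sum]
  have : (∑ n ∈ P.support, hasseDeriv i (monomial n (coeff n P))) = hasseDeriv i P := by
    rw [hasseDeriv]
    exact Finset.sum_congr rfl fun n hn => hasseDeriv_monomial i n (coeff n P)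
  rw [this]

lemma poly_zero {d m : ℕ} (p : Polynomial F) (hdeg : p.natDegree ≤ d) (S : Finset F)
    (hdvd : ∀ t ∈ S, (Polynomial.X - Polynomial.C t) ^ m ∣ p) (hcard : d < m * S.card) :
    p = 0 := by
  by_contra hp
  have hdvd2 : (∏ t ∈ S, (Polynomial.X - Polynomial.C t) ^ m) ∣ p := by
    refine Finset.prod_dvd_of_coprime (fun a ha b hb hab => ?_) hdvd
    exact (Polynomial.pairwise_coprime_X_sub_C Function.injective_id hab).pow
  have hdeg2 := Polynomial.natDegree_le_of_dvd hdvd2 hp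
  rw [Polynomial.natDegree_prod _ _
    (fun t _ => pow_ne_zero _ (Polynomial.X_sub_C_ne_zero t))] at hdeg2
  simp only [Polynomial.natDegree_pow, Polynomial.natDegree_X_sub_C, mul_one] at hdeg2
  rw [Finset.sum_const, smul_eq_mul, mul_comm] at hdeg2
  omega

lemma grid_vanish {m : ℕ} (hm : 0 < m) {ι : Type*} :
    ∀ (r : ℕ) (S : Fin r → Finset F), (∀ j, m ≤ (S j).card) →
    ∀ (T : Finset ι) (E : ι → Fin r → ℕ) (c : ι → F),
      (∀ i ∈ T, ∀ j, E i j < m) → (Set.InjOn E T) →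
      (∀ u ∈ Fintype.piFinset S, ∑ i ∈ T, c i * ∏ j, u j ^ E i j = 0) →
      ∀ i ∈ T, c i = 0 := by
  intro r
  induction r with
  | zero =>
    intro S hS T E c hE hinj hvan i hi
    have hu : (fun j : Fin 0 => (j.elim0 : F)) ∈ Fintype.piFinset S := by
      rw [Fintype.mem_piFinset]; exact fun j => j.elim0
    have h0 := hvan _ hu
    have hT : T = {i} :=
      Finset.eq_singleton_iff_unique_mem.mpr
        ⟨hi, fun i' hi' => hinj hi' hi (funext fun j => j.elim0)⟩
    rw [hT, Finset.sum_singleton] at h0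
    simpa using h0
  | succ r ih =>
    intro S hS T E c hE hinj hvan i hi
    classical
    have key : ∀ e : ℕ, ∀ u' ∈ Fintype.piFinset (fun j : Fin r => S j.castSucc),
        ∑ i' ∈ T.filter (fun i' => E i' (Fin.last r) = e),
          c i' * ∏ j : Fin r, u' j ^ E i' (Fin.castSucc j) = 0 := by
      intro e u' hu'
      rcases le_or_gt m e with he | he
      · rw [Finset.filter_false_of_mem, Finset.sum_empty]
        intro i' hi'
        exact fun h => absurd (h ▸ hE i' hi' (Fin.last r)) (not_lt.mpr he)
      · set γ : ℕ → F := fun e => ∑ i' ∈ T.filter (fun i' => E i' (Fin.last r) = e),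
          c i' * ∏ j : Fin r, u' j ^ E i' (Fin.castSucc j) with hγ
        set p : Polynomial F := ∑ e ∈ Finset.range m, Polynomial.C (γ e) * Polynomial.X ^ e
          with hp
        have hpz : p = 0 := by
          refine Polynomial.eq_zero_of_natDegree_lt_card_of_eval_eq_zero' p
            (S (Fin.last r)) (fun t ht => ?_) ?_
          · have hu : Fin.snoc u' t ∈ Fintype.piFinset S := by
              rw [Fintype.mem_piFinset]
              refine Fin.lastCases ?_ ?_
              · rw [Fin.snoc_last]; exact ht
              · intro j; rw [Fin.snoc_castSucc]
                exact Fintype.mem_piFinset.mp hu' j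
            have h0 := hvan _ hu
            rw [hp]
            simp only [Polynomial.eval_finset_sum, Polynomial.eval_mul, Polynomial.eval_C,
              Polynomial.eval_pow, Polynomial.eval_X, hγ]
            simp_rw [Finset.sum_mul]
            have hre : ∀ e ∈ Finset.range m,
                (∑ i' ∈ T.filter (fun i' => E i' (Fin.last r) = e),
                  c i' * (∏ j : Fin r, u' j ^ E i' (Fin.castSucc j)) * t ^ e)
                = ∑ i' ∈ T.filter (fun i' => E i' (Fin.last r) = e),
                  c i' * ∏ j : Fin (r+1), Fin.snoc u' t j ^ E i' j := by
              intro e _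
              refine Finset.sum_congr rfl fun i' hi' => ?_
              rw [Fin.prod_univ_castSucc]
              simp only [Fin.snoc_castSucc, Fin.snoc_last, (Finset.mem_filter.mp hi').2]
              ring
            rw [Finset.sum_congr rfl hre,
              Finset.sum_fiberwise_of_maps_to
                (fun i' hi' => Finset.mem_range.mpr (hE i' hi' (Fin.last r)))]
            exact h0
          · refine lt_of_lt_of_le (lt_of_le_of_lt ?_ (Nat.sub_lt hm Nat.one_pos))
              (hS (Fin.last r))
            rw [hp]
            refine Polynomial.natDegree_sum_le_of_forall_le _ _ fun e he =>
              le_trans (Polynomial.natDegree_C_mul_le _ _) ?_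
            rw [Polynomial.natDegree_X_pow]
            exact Nat.le_sub_one_of_lt (Finset.mem_range.mp he)
        have hc := congrArg (fun q => Polynomial.coeff q e) hpz
        simp only [hp, Polynomial.finset_sum_coeff, Polynomial.coeff_C_mul,
          Polynomial.coeff_X_pow, Polynomial.coeff_zero, mul_ite, mul_one, mul_zero,
          Finset.sum_ite_eq] at hc
        rw [if_pos (Finset.mem_range.mpr he)] at hc
        rw [hγ] at hc
        simpa using hc
    refine ih (fun j => S j.castSucc) (fun j => hS _)
      (T.filter (fun i' => E i' (Fin.last r) = E i (Fin.last r)))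
      (fun i' j => E i' (Fin.castSucc j)) c ?_ ?_ (key (E i (Fin.last r))) i
      (Finset.mem_filter.mpr ⟨hi, rfl⟩)
    · intro i' hi' j
      exact hE i' (Finset.mem_filter.mp hi').1 _
    · intro i1 h1 i2 h2 h12
      rw [Finset.coe_filter, Set.mem_setOf_eq] at h1 h2
      refine hinj h1.1 h2.1 (funext fun j => ?_)
      refine Fin.lastCases ?_ ?_ j
      · rw [h1.2, h2.2]
      · intro j'; exact congrFun h12 j'

end Aux

/-- For `s ≥ 2` and `d < m(q-1)`, every coordinate `w₀` of the multiplicity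
code `C(m,d,s,q)` has `k = ⌊q/m⌋^(s-1)` pairwise disjoint recovering sets, all avoiding `w₀`;
i.e. `C(m,d,s,q)` is a `k`-PIR code. -/
theorem stmt3 {F : Type*} [Field F] [Fintype F] (q m d s : ℕ)
    (hcard : Fintype.card F = q) (hm : 0 < m) (hd : 0 < d) (hs : 2 ≤ s)
    (hdq : d < m * (q - 1)) :
    ∀ w0 : Fin s → F,
      ∃ R : Fin ((q / m) ^ (s - 1)) → Set (Fin s → F),
        (∀ a b, a ≠ b → Disjoint (R a) (R b)) ∧
        (∀ a, w0 ∉ R a) ∧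
        (∀ a, ∀ P Q : MvPolynomial (Fin s) F, P.totalDegree ≤ d → Q.totalDegree ≤ d →
          (∀ w ∈ R a, ∀ i : Fin s →₀ ℕ, (∑ j : Fin s, i j) < m →
            eval w (hasseDeriv i P) = eval w (hasseDeriv i Q)) →
          ∀ i : Fin s →₀ ℕ, (∑ j : Fin s, i j) < m →
            eval w0 (hasseDeriv i P) = eval w0 (hasseDeriv i Q)) := by
  obtain ⟨n, rfl⟩ : ∃ n, s = n + 2 := ⟨s - 2, by omega⟩
  intro w0
  classical
  set b := q / m with hb
  let ψ : Fin q → F := (Fintype.equivFinOfCardEq hcard).symm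
  have hψ : Function.Injective ψ := (Fintype.equivFinOfCardEq hcard).symm.injective
  have hblt : ∀ (a : Fin b) (t : Fin m), a.1 * m + t.1 < q := by
    intro a t
    have h2 : (a.1 + 1) * m ≤ b * m := Nat.mul_le_mul_right m a.2
    rw [Nat.succ_mul] at h2
    have h3 : b * m ≤ q := Nat.div_mul_le_self q m
    have h4 := t.2
    omega
  let Blk : Fin b → Finset F :=
    fun a => Finset.univ.image (fun t : Fin m => ψ ⟨a.1 * m + t.1, hblt a t⟩)
  have hBlkcard : ∀ a, (Blk a).card = m := by
    intro a
    rw [Finset.card_image_of_injective _ (fun t t' htt => ?_), Finset.card_univ, Fintype.card_fin]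
    have := congrArg Fin.val (hψ htt)
    simp only at this
    exact Fin.ext (by omega)
  have hBlkdisj : ∀ a a' : Fin b, a ≠ a' → ∀ x, x ∈ Blk a → x ∈ Blk a' → False := by
    intro a a' ha x hx hx'
    obtain ⟨t, _, ht⟩ := Finset.mem_image.mp hx
    obtain ⟨t', _, ht'⟩ := Finset.mem_image.mp hx'
    have heq := congrArg Fin.val (hψ (ht.trans ht'.symm))
    simp only at heq
    refine ha (Fin.ext ?_)
    have h1 : a.1 = (a.1 * m + t.1) / m := by
      rw [mul_comm, Nat.mul_add_div hm, Nat.div_eq_of_lt t.2, add_zero]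
    have h2 : a'.1 = (a'.1 * m + t'.1) / m := by
      rw [mul_comm, Nat.mul_add_div hm, Nat.div_eq_of_lt t'.2, add_zero]
    rw [h1, h2, heq]
  let ε : Fin (b ^ (n+1)) ≃ (Fin (n+1) → Fin b) := finFunctionFinEquiv.symm
  let R : Fin (b ^ (n+1)) → Set (Fin (n+2) → F) := fun a =>
    {w | ∃ t : F, t ≠ 0 ∧ ∃ u : Fin (n+1) → F,
      u ∈ Fintype.piFinset (fun j => Blk (ε a j)) ∧
      w = fun j => w0 j + t * (Fin.cons (1:F) u : Fin (n+2) → F) j}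
  refine ⟨R, ?_, ?_, ?_⟩
  · -- disjointness
    intro a a' haa
    rw [Set.disjoint_left]
    rintro w ⟨t, ht, u, hu, rfl⟩ ⟨t', ht', u', hu', heq⟩
    have h0 := congrFun heq 0
    simp only [Fin.cons_zero, mul_one, add_right_inj] at h0
    subst h0
    have huu : u = u' := by
      funext j
      have hj := congrFun heq j.succ
      simp only [Fin.cons_succ, add_right_inj] at hj
      exact mul_left_cancel₀ ht hj
    obtain ⟨j, hj⟩ := Function.ne_iff.mp (fun h : ε a = ε a' => haa (ε.injective h))
    exact hBlkdisj _ _ hj (u j) (Fintype.mem_piFinset.mp hu j)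
      (huu ▸ Fintype.mem_piFinset.mp hu' j)
  · -- w0 not in R a
    rintro a ⟨t, ht, u, hu, heq⟩
    have h0 := congrFun heq 0
    simp only [Fin.cons_zero, mul_one, left_eq_add] at h0
    exact ht h0
  · -- recovery
    intro a P Q hP hQ hag i0 hi0
    set D := P - Q with hDdef
    have hag' : ∀ w ∈ R a, ∀ i : Fin (n+2) →₀ ℕ, (∑ j, i j) < m →
        eval w (hasseDeriv i D) = 0 := by
      intro w hw i hi
      rw [hDdef, hasseDeriv_sub, map_sub, sub_eq_zero]
      exact hag w hw i hi
    have hdegD : D.totalDegree ≤ d := le_trans (totalDegree_sub P Q) (max_le hP hQ)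
    rw [← sub_eq_zero, ← map_sub, ← hasseDeriv_sub, ← hDdef]
    set N : (Fin (n+2)) →₀ ℕ := D.support.sup id with hNdef
    have hsupN : ∀ nn ∈ D.support, nn ≤ N := fun nn h => Finset.le_sup (f := id) h
    by_cases hIic : i0 ≤ N
    swap
    · have hz : hasseDeriv i0 D = 0 := by
        refine hasseDeriv_eq_zero i0 D fun nn hnn => ?_
        rw [Finsupp.le_def] at hIic
        push_neg at hIic
        obtain ⟨j, hj⟩ := hIic
        exact ⟨j, lt_of_le_of_lt (hsupN nn hnn j) hj⟩
      rw [hz, map_zero]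
    · have main : ∀ u ∈ Fintype.piFinset (fun j => Blk (ε a j)), ∀ k : ℕ,
          ∑ i ∈ (Finset.Iic N).filter (fun i => (∑ j, i j) = k),
            eval w0 (hasseDeriv i D) * ∏ j, (Fin.cons (1:F) u : Fin (n+2) → F) j ^ i j = 0 := by
        intro u hu k
        set vv : Fin (n+2) → F := Fin.cons (1:F) u with hvvdef
        have rep : ∀ x : Fin (n+2) → F,
            aeval (fun j => Polynomial.C (x j) + Polynomial.C (vv j) * Polynomial.X) D
            = ∑ i ∈ Finset.Iic N,
                Polynomial.C (eval x (hasseDeriv i D) * ∏ j, vv j ^ i j)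
                  * Polynomial.X ^ (∑ j, i j) := by
          intro x
          have h := taylor_aeval (Polynomial F) x
            (fun j => Polynomial.C (vv j) * Polynomial.X) D N hsupN
          simp only [Polynomial.algebraMap_eq] at h
          rw [h]
          refine Finset.sum_congr rfl fun i _ => ?_
          simp_rw [mul_pow]
          rw [Finset.prod_mul_distrib, Finset.prod_pow_eq_pow_sum]
          simp_rw [← Polynomial.C_pow]
          rw [← map_prod, map_mul]
          ring
        set p0 := aeval (fun j => Polynomial.C (w0 j) + Polynomial.C (vv j) * Polynomial.X) D
          with hp0def
        have hrep0 : p0 = ∑ i ∈ Finset.Iic N,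
            Polynomial.C (eval w0 (hasseDeriv i D) * ∏ j, vv j ^ i j)
              * Polynomial.X ^ (∑ j, i j) := rep w0
        have hdvd : ∀ t ∈ (Finset.univ : Finset F).erase 0,
            (Polynomial.X - Polynomial.C t) ^ m ∣ p0 := by
          intro t ht
          rw [Finset.mem_erase] at ht
          have hx'R : (fun j => w0 j + t * vv j) ∈ R a := ⟨t, ht.1, u, hu, rfl⟩
          have hXm : (Polynomial.X : Polynomial F) ^ m ∣
              aeval (fun j => Polynomial.C (w0 j + t * vv j)
                + Polynomial.C (vv j) * Polynomial.X) D := by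
            rw [rep (fun j => w0 j + t * vv j)]
            refine Finset.dvd_sum fun i hiN => ?_
            rcases lt_or_ge (∑ j, i j) m with hlt | hge
            · rw [hag' _ hx'R i hlt, zero_mul, map_zero, zero_mul]
              exact dvd_zero _
            · exact Dvd.dvd.mul_left (pow_dvd_pow _ hge) _
          obtain ⟨rr, hrr⟩ := hXm
          have hc1 : ∀ (pq : MvPolynomial (Fin (n+2)) F) (f : Fin (n+2) → Polynomial F)
              (g : Polynomial F),
              (aeval f pq).comp g = aeval (fun j => (f j).comp g) pq := by
            intro pq f g
            have hca : ∀ p : Polynomial F, p.comp g = Polynomial.aeval g p := by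
              intro p
              rw [Polynomial.aeval_def, Polynomial.comp, Polynomial.algebraMap_eq]
            rw [hca, MvPolynomial.comp_aeval_apply]
            simp_rw [hca]
          have hcomp : p0 = (aeval (fun j => Polynomial.C (w0 j + t * vv j)
              + Polynomial.C (vv j) * Polynomial.X) D).comp
                (Polynomial.X - Polynomial.C t) := by
            have harg : ∀ j : Fin (n+2), (Polynomial.C (w0 j + t * vv j)
                + Polynomial.C (vv j) * Polynomial.X).comp (Polynomial.X - Polynomial.C t)
                = Polynomial.C (w0 j) + Polynomial.C (vv j) * Polynomial.X := by
              intro j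
              simp only [Polynomial.add_comp, Polynomial.C_comp, Polynomial.mul_comp,
                Polynomial.X_comp, map_add, map_mul]
              ring
            rw [hp0def, hc1]
            exact (congrArg (fun f : Fin (n+2) → Polynomial F => aeval f D)
              (funext harg)).symm
          rw [hcomp, hrr, Polynomial.mul_comp, Polynomial.pow_comp, Polynomial.X_comp]
          exact dvd_mul_right _ _
        have hdeg0 : p0.natDegree ≤ d := by
          rw [hrep0]
          refine Polynomial.natDegree_sum_le_of_forall_le _ _ fun i hiN => ?_
          rcases le_or_gt (∑ j, i j) d with hle | hgt
          · refine le_trans (Polynomial.natDegree_C_mul_le _ _) ?_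
            rw [Polynomial.natDegree_X_pow]; exact hle
          · have hz : hasseDeriv i D = 0 := by
              refine hasseDeriv_eq_zero i D fun nn hnn => ?_
              by_contra hno
              push_neg at hno
              have hsum : (∑ j, i j) ≤ ∑ j, nn j := Finset.sum_le_sum fun j _ => hno j
              have h2 : nn.sum (fun _ e => e) ≤ D.totalDegree := le_totalDegree hnn
              rw [Finsupp.sum_fintype _ _ (fun j => rfl)] at h2
              omega
            rw [hz, map_zero, zero_mul, map_zero, zero_mul]
            simp
        have hp0z : p0 = 0 := by
          refine poly_zero p0 hdeg0 _ hdvd ?_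
          rw [Finset.card_erase_of_mem (Finset.mem_univ 0), Finset.card_univ, hcard]
          exact hdq
        rw [hp0z] at hrep0
        have hco := congrArg (fun pp => Polynomial.coeff pp k) hrep0
        simp only [Polynomial.coeff_zero, Polynomial.finset_sum_coeff, Polynomial.coeff_C_mul,
          Polynomial.coeff_X_pow, mul_ite, mul_one, mul_zero] at hco
        rw [Finset.sum_filter]
        refine Eq.trans (Finset.sum_congr rfl fun i _ => ?_) hco.symm
        simp [eq_comm]
      have happ := grid_vanish hm (n+1) (fun j => Blk (ε a j))
        (fun j => (hBlkcard _).symm.le)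
        ((Finset.Iic N).filter (fun i => (∑ j, i j) = ∑ j, i0 j))
        (fun i (j : Fin (n+1)) => i j.succ)
        (fun i => eval w0 (hasseDeriv i D)) ?_ ?_ ?_ i0
        (Finset.mem_filter.mpr ⟨Finset.mem_Iic.mpr hIic, rfl⟩)
      · exact happ
      · intro i hi j
        have h1 := (Finset.mem_filter.mp hi).2
        have h2 : i j.succ ≤ ∑ j', i j' :=
          Finset.single_le_sum (fun j' _ => Nat.zero_le _) (Finset.mem_univ j.succ)
        show i j.succ < m
        omega
      · intro i1 h1 i2 h2 h12
        rw [Finset.coe_filter, Set.mem_setOf_eq] at h1 h2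
        have s1 : ∑ j' : Fin (n+1), i1 j'.succ = ∑ j' : Fin (n+1), i2 j'.succ :=
          Finset.sum_congr rfl fun j' _ => congrFun h12 j'
        have s2 : i1 0 + ∑ j' : Fin (n+1), i1 j'.succ
            = i2 0 + ∑ j' : Fin (n+1), i2 j'.succ := by
          rw [← Fin.sum_univ_succ (fun j => i1 j), ← Fin.sum_univ_succ (fun j => i2 j),
            h1.2, h2.2]
        have h00 : i1 0 = i2 0 := by
          rw [s1] at s2
          exact Nat.add_right_cancel s2
        ext j
        refine Fin.cases ?_ ?_ j
        · exact h00
        · intro j'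
          exact congrFun h12 j'
      · intro uu huu
        have hmm := main uu huu (∑ j, i0 j)
        rw [← hmm]
        refine Finset.sum_congr rfl fun i _ => ?_
        congr 1
        conv_rhs => rw [Fin.prod_univ_succ]
        simp [Fin.cons_zero, Fin.cons_succ]
end

section
/- For every real number ε ≥ 1 and every real τ > 0, there exist positive constants c_1, c_2 and an integer n_0 such that for every n ≥ n_0 there exists a binary k-PIR code [N, n, k]^P with k ≥ c_1 · n^ε and length N ≤ c_2 · n^{ε+τ}. -/
/-- There is an `[N,n,k]` PIR code over the field `F`: a systematic injective `F`-linear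
encoder `E : F^n → F^N` such that every information coordinate has `k` pairwise disjoint
recovering sets. -/
def ExistsPIRCode (F : Type) [Field F] (N n k : ℕ) : Prop :=
  ∃ (h : n ≤ N) (E : (Fin n → F) →ₗ[F] (Fin N → F)),
    Function.Injective E ∧
    (∀ (x : Fin n → F) (i : Fin n), E x (Fin.castLE h i) = x i) ∧
    ∀ i : Fin n, ∃ R : Fin k → Finset (Fin N),
      (∀ a b, a ≠ b → Disjoint (R a) (R b)) ∧
      ∀ a, ∀ x x' : Fin n → F, (∀ c ∈ R a, E x c = E x' c) → x i = x' i

open Polynomial in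
theorem pir_construction
    (F : Type) [Field F] [Fintype F] [Algebra (ZMod 2) F]
    (m D nn s : ℕ) (hm : 1 ≤ m) (hD : 2 ≤ D)
    (hn : nn = D ^ m)
    (hcardD : D ≤ Fintype.card F)
    (hdeg : m * (D - 1) < Fintype.card F - 1)
    (hs : s = Module.finrank (ZMod 2) F) :
    ExistsPIRCode (ZMod 2) (nn + Fintype.card F ^ m * s) nn
      (Fintype.card F ^ (m - 1)) := by
  classical
  set q := Fintype.card F with hq
  -- an injection of Fin D into F
  obtain ⟨ς⟩ : Nonempty (Fin D ↪ F) :=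
    Function.Embedding.nonempty_of_card_le (by simpa using hcardD)
  have hςinj : Set.InjOn ς (Finset.univ : Finset (Fin D)) := ς.injective.injOn
  -- identification of message indices with monomial multi-indices
  let gE : Fin nn ≃ (Fin m → Fin D) := Fintype.equivOfCardEq (by simp [hn, Fintype.card_fun])
  -- basis of F over ZMod 2
  have hFD : Module.Finite (ZMod 2) F := Module.Finite.of_finite
  let b : Module.Basis (Fin s) (ZMod 2) F :=
    (Module.finBasis (ZMod 2) F).reindex (finCongr hs.symm)
  -- position indexing
  let P := Sum (Fin nn) ((Fin m → F) × Fin s)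
  have hcardM : Fintype.card ((Fin m → F) × Fin s) = q ^ m * s := by
    simp [Fintype.card_fun, hq]
  let eM : ((Fin m → F) × Fin s) ≃ Fin (q ^ m * s) := Fintype.equivFinOfCardEq hcardM
  let e : P ≃ Fin (nn + q ^ m * s) :=
    (Equiv.sumCongr (Equiv.refl (Fin nn)) eM).trans finSumFinEquiv
  have hle : nn ≤ nn + q ^ m * s := Nat.le_add_right _ _
  have he_inl : ∀ i : Fin nn, e (Sum.inl i) = Fin.castLE hle i := by
    intro i
    apply Fin.ext
    have h1 : ((Equiv.refl (Fin nn)).sumCongr eM) (Sum.inl i) = Sum.inl i := rfl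
    simp [e, h1, finSumFinEquiv_apply_left]
  -- Lagrange basis polynomials
  let Lag : Fin D → F[X] := fun j => Lagrange.basis Finset.univ (ς : Fin D → F) j
  have hLagDeg : ∀ j : Fin D, (Lag j).natDegree = D - 1 := by
    intro j
    simp [Lag, Lagrange.natDegree_basis hςinj (Finset.mem_univ j)]
  -- evaluation of the interpolating polynomial
  let ev : (Fin nn → ZMod 2) → (Fin m → F) → F := fun x v =>
    ∑ i' : Fin nn, (algebraMap (ZMod 2) F (x i')) * ∏ j : Fin m, (Lag (gE i' j)).eval (v j)
  have hev_add : ∀ x y v, ev (x + y) v = ev x v + ev y v := by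
    intro x y v
    simp [ev, add_mul, Finset.sum_add_distrib]
  have hev_zero : ∀ v, ev 0 v = 0 := by
    intro v; simp [ev]
  -- the encoder
  let E0 : (Fin nn → ZMod 2) → (Fin (nn + q ^ m * s) → ZMod 2) := fun x =>
    (Sum.elim x (fun vj => b.repr (ev x vj.1) vj.2)) ∘ e.symm
  have hE0_add : ∀ x y, E0 (x + y) = E0 x + E0 y := by
    intro x y
    funext pos
    rcases h : e.symm pos with i | vj <;>
      simp [E0, h, hev_add, map_add]
  have hE0_zero : E0 0 = 0 := by
    funext pos
    rcases h : e.symm pos with i | vj <;> simp [E0, h, hev_zero]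
  let E : (Fin nn → ZMod 2) →ₗ[ZMod 2] (Fin (nn + q ^ m * s) → ZMod 2) :=
    { toFun := E0
      map_add' := hE0_add
      map_smul' := by
        intro c x
        have hc : c = 0 ∨ c = 1 := by revert c; decide
        rcases hc with rfl | rfl
        · simp [hE0_zero]
        · simp }
  have hsys : ∀ (x : Fin nn → ZMod 2) (i : Fin nn), E x (Fin.castLE hle i) = x i := by
    intro x i
    show E0 x (Fin.castLE hle i) = x i
    rw [← he_inl]
    simp [E0]
  refine ⟨hle, E, ?_, hsys, ?_⟩
  · intro x y hxy
    funext i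
    rw [← hsys x i, ← hsys y i, hxy]
  -- recovery
  intro i
  let p : Fin m → F := fun j => ς (gE i j)
  let z : Fin m := ⟨0, hm⟩
  let Dir := ({j : Fin m // j ≠ z} → F)
  have hcardDir : Fintype.card Dir = q ^ (m - 1) := by
    have h1 : Fintype.card {j : Fin m // j ≠ z} = m - 1 := by
      simp [Fintype.card_subtype_compl, Fintype.card_subtype_eq]
    simp [Dir, Fintype.card_fun, h1, hq]
  let eK : Fin (q ^ (m - 1)) ≃ Dir := (Fintype.equivFinOfCardEq hcardDir).symm
  let w : Dir → (Fin m → F) := fun u j => if hj : j = z then 1 else u ⟨j, hj⟩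
  have hwz : ∀ u, w u z = 1 := by intro u; simp [w]
  let pointOf : Dir → F → (Fin m → F) := fun u s0 j => w u j * s0 + p j
  let R : Fin (q ^ (m - 1)) → Finset (Fin (nn + q ^ m * s)) := fun a =>
    ((Finset.univ.erase (0 : F)) ×ˢ (Finset.univ : Finset (Fin s))).image
      (fun sj => e (Sum.inr (pointOf (eK a) sj.1, sj.2)))
  have hEval : ∀ (x : Fin nn → ZMod 2) (v : Fin m → F) (j : Fin s),
      E x (e (Sum.inr (v, j))) = b.repr (ev x v) j := by
    intro x v j
    show E0 x _ = _
    simp [E0]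
  refine ⟨R, ?_, ?_⟩
  · -- disjointness
    intro a a' haa'
    rw [Finset.disjoint_left]
    rintro c hca hca'
    obtain ⟨⟨s1, j1⟩, hmem1, hc1⟩ := Finset.mem_image.mp hca
    obtain ⟨⟨s2, j2⟩, hmem2, hc2⟩ := Finset.mem_image.mp hca'
    have hs1 : s1 ≠ 0 := (Finset.mem_erase.mp (Finset.mem_product.mp hmem1).1).1
    have heq : (pointOf (eK a) s1, j1) = (pointOf (eK a') s2, j2) := by
      apply Sum.inr_injective
      exact e.injective (hc1.trans hc2.symm)
    have hpt : pointOf (eK a) s1 = pointOf (eK a') s2 := congrArg Prod.fst heq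
    have hss : s1 = s2 := by
      have := congrFun hpt z
      simpa [pointOf, hwz] using this
    have huu : eK a = eK a' := by
      funext j
      have := congrFun hpt j
      simp only [pointOf, ← hss, add_left_cancel_iff] at this
      have h2 : w (eK a) j.1 = w (eK a') j.1 := by
        exact mul_right_cancel₀ hs1 (by simpa [mul_comm] using this)
      simpa [w, j.2] using h2
    exact haa' (eK.injective huu)
  · -- recovery
    intro a x x' hagree
    set u := eK a with hu
    -- values agree along the punctured line
    have hval : ∀ s0 : F, s0 ≠ 0 → ev x (pointOf u s0) = ev x' (pointOf u s0) := by
      intro s0 hs0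
      apply b.repr.injective
      apply Finsupp.ext
      intro j
      have hmem : e (Sum.inr (pointOf u s0, j)) ∈ R a := by
        apply Finset.mem_image.mpr
        exact ⟨(s0, j), Finset.mem_product.mpr
          ⟨Finset.mem_erase.mpr ⟨hs0, Finset.mem_univ _⟩, Finset.mem_univ _⟩, rfl⟩
      have := hagree _ hmem
      rwa [hEval, hEval] at this
    -- the difference polynomial along the line
    let cc : Fin nn → F := fun i' =>
      algebraMap (ZMod 2) F (x i') - algebraMap (ZMod 2) F (x' i')
    let U : F[X] := ∑ i' : Fin nn, C (cc i') *
      ∏ j : Fin m, (Lag (gE i' j)).comp (C (w u j) * X + C (p j))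
    have hevalU : ∀ s0 : F, U.eval s0
        = ev x (pointOf u s0) - ev x' (pointOf u s0) := by
      intro s0
      simp [U, ev, cc, pointOf, eval_finset_sum, eval_prod, sub_mul,
        Finset.sum_sub_distrib]
    have hroots : ∀ s0 ∈ Finset.univ.erase (0 : F), U.eval s0 = 0 := by
      intro s0 hs0
      rw [hevalU, sub_eq_zero]
      exact hval s0 (Finset.mem_erase.mp hs0).1
    have hdegU : U.natDegree ≤ m * (D - 1) := by
      apply natDegree_sum_le_of_forall_le
      intro i' _
      apply le_trans (natDegree_C_mul_le _ _)
      apply le_trans (natDegree_prod_le _ _)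
      calc ∑ j : Fin m, ((Lag (gE i' j)).comp (C (w u j) * X + C (p j))).natDegree
          ≤ ∑ _j : Fin m, (D - 1) := by
            apply Finset.sum_le_sum
            intro j _
            rw [natDegree_comp, hLagDeg]
            calc (D - 1) * (C (w u j) * X + C (p j)).natDegree
                ≤ (D - 1) * 1 := Nat.mul_le_mul_left _ natDegree_linear_le
              _ = D - 1 := Nat.mul_one _
        _ = m * (D - 1) := by simp [Finset.sum_const, mul_comm]
    have hU : U = 0 := by
      apply eq_zero_of_natDegree_lt_card_of_eval_eq_zero' U _ hroots
      rw [Finset.card_erase_of_mem (Finset.mem_univ _), Finset.card_univ]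
      exact lt_of_le_of_lt hdegU hdeg
    have h0 : U.eval 0 = 0 := by rw [hU]; simp
    have hU0 : U.eval 0 = cc i := by
      simp only [U, eval_finset_sum, eval_mul, eval_C, eval_prod, eval_comp, eval_add,
        eval_mul, eval_X, mul_zero, zero_add]
      rw [Finset.sum_eq_single i]
      · have : ∀ j : Fin m, (Lag (gE i j)).eval (p j) = 1 := by
          intro j
          exact Lagrange.eval_basis_self hςinj (Finset.mem_univ _)
        simp [this]
      · intro i' _ hne
        have hgne : gE i' ≠ gE i := fun hgg => hne (gE.injective hgg)
        obtain ⟨j0, hj0⟩ := Function.ne_iff.mp hgne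
        apply mul_eq_zero_of_right
        apply Finset.prod_eq_zero (Finset.mem_univ j0)
        exact Lagrange.eval_basis_of_ne hj0 (Finset.mem_univ _)
      · intro h; exact absurd (Finset.mem_univ i) h
    have : cc i = 0 := by rw [← hU0, h0]
    have hmap : algebraMap (ZMod 2) F (x i) = algebraMap (ZMod 2) F (x' i) := by
      have := sub_eq_zero.mp this
      exact this
    exact (algebraMap (ZMod 2) F).injective hmap

theorem pir_pad (F : Type) [Field F] {N n n' k : ℕ} (hnn : n ≤ n')
    (h : ExistsPIRCode F N n' k) : ExistsPIRCode F N n k := by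
  obtain ⟨hle, E, hinj, hsys, hrec⟩ := h
  refine ⟨hnn.trans hle, ?_⟩
  let ext : (Fin n → F) →ₗ[F] (Fin n' → F) :=
    { toFun := fun x j => if hj : (j : ℕ) < n then x ⟨j, hj⟩ else 0
      map_add' := by intro x y; funext j; by_cases hj : (j : ℕ) < n <;> simp [hj]
      map_smul' := by intro c x; funext j; by_cases hj : (j : ℕ) < n <;> simp [hj] }
  have hext : ∀ (x : Fin n → F) (i : Fin n), ext x (Fin.castLE hnn i) = x i := by
    intro x i
    simp only [ext, LinearMap.coe_mk, AddHom.coe_mk]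
    rw [dif_pos (by simpa using i.isLt)]
    congr 1
  refine ⟨E.comp ext, ?_, ?_, ?_⟩
  · intro x y hxy
    funext i
    have := congrFun hxy (Fin.castLE (hnn.trans hle) i)
    simp only [LinearMap.comp_apply] at this
    have h1 : (Fin.castLE (hnn.trans hle) i) = Fin.castLE hle (Fin.castLE hnn i) := rfl
    rw [h1, hsys, hsys, hext, hext] at this
    exact this
  · intro x i
    have h1 : (Fin.castLE (hnn.trans hle) i) = Fin.castLE hle (Fin.castLE hnn i) := rfl
    simp only [LinearMap.comp_apply, h1, hsys, hext]
  · intro i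
    obtain ⟨R, hdisj, hR⟩ := hrec (Fin.castLE hnn i)
    refine ⟨R, hdisj, fun a x x' hagree => ?_⟩
    have := hR a (ext x) (ext x') (fun c hc => hagree c hc)
    rwa [hext, hext] at this

theorem pir_gf (m t' t : ℕ) (hm : 2 ≤ m) (ht' : 1 ≤ t') (ht : 1 ≤ t)
    (hdeg : m * (2 ^ t' - 1) < 2 ^ t - 1) :
    ExistsPIRCode (ZMod 2) (2 ^ (t' * m) + 2 ^ (t * m) * t) (2 ^ (t' * m))
      (2 ^ (t * (m - 1))) := by
  let F := GaloisField 2 t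
  have : Fintype F := Fintype.ofFinite F
  have hcard : Fintype.card F = 2 ^ t := by
    rw [← Nat.card_eq_fintype_card, GaloisField.card 2 t (by omega)]
  have hrank : Module.finrank (ZMod 2) F = t := by
    have h2 : Fintype.card F = Fintype.card (ZMod 2) ^ Module.finrank (ZMod 2) F :=
      Module.card_eq_pow_finrank
    rw [hcard, ZMod.card] at h2
    exact (Nat.pow_right_injective le_rfl h2.symm)
  have hmain := pir_construction F m (2 ^ t') (2 ^ (t' * m)) t
    (by omega) (by have := Nat.one_lt_two_pow_iff.mpr (by omega : t' ≠ 0); omega)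
    (by rw [← pow_mul, mul_comm])
    (by rw [hcard]; exact Nat.pow_le_pow_right (by norm_num) (by
      have h1 : 2 ^ t' - 1 ≤ m * (2 ^ t' - 1) := Nat.le_mul_of_pos_left _ (by omega)
      have h2 : (1:ℕ) ≤ 2 ^ t' := Nat.one_le_two_pow
      have h3 : (1:ℕ) ≤ 2 ^ t := Nat.one_le_two_pow
      have h4 : 2 ^ t' ≤ 2 ^ t := by omega
      exact (Nat.pow_le_pow_iff_right (by norm_num)).mp h4))
    (by rw [hcard]; exact hdeg)
    hrank.symm
  rw [hcard, ← pow_mul, ← pow_mul] at hmain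
  exact hmain

theorem two_pow_ge_add_two : ∀ m : ℕ, 2 ≤ m → m + 2 ≤ 2 ^ m := by
  intro m hm
  induction m with
  | zero => omega
  | succ k ih =>
    rcases Nat.lt_or_ge k 2 with h | h
    · interval_cases k <;> simp_all
    · have h1 := ih h
      have h2 : 2 ^ (k + 1) = 2 * 2 ^ k := by ring
      omega


set_option maxHeartbeats 1000000 in
/-- For every `ε ≥ 1` and `τ > 0` there are constants `c₁, c₂ > 0` and `n₀`
such that for all `n ≥ n₀` there is a binary `k`-PIR code `[N,n,k]` with `k ≥ c₁·n^ε` and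
length `N ≤ c₂·n^(ε+τ)`. -/
theorem stmt6 (ε τ : ℝ) (hε : 1 ≤ ε) (hτ : 0 < τ) :
    ∃ c1 c2 : ℝ, 0 < c1 ∧ 0 < c2 ∧ ∃ n0 : ℕ, ∀ n : ℕ, n0 ≤ n →
      ∃ N k : ℕ,
        c1 * (n : ℝ) ^ ε ≤ (k : ℝ) ∧
        (N : ℝ) ≤ c2 * (n : ℝ) ^ (ε + τ) ∧
        ExistsPIRCode (ZMod 2) N n k := by
  have hε0 : (0:ℝ) < ε := lt_of_lt_of_le one_pos hε
  set m : ℕ := ⌈4 * ε / τ⌉₊ + 2 with hm_def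
  set t0 : ℕ := m * m + ⌈4 / τ⌉₊ + 1 with ht0_def
  have hm2 : 2 ≤ m := by omega
  have hM : 4 * ε / τ + 2 ≤ (m:ℝ) := by
    have h1 := Nat.le_ceil (4 * ε / τ)
    rw [hm_def]
    push_cast
    linarith
  have hMpos : (0:ℝ) < (m:ℝ) - 1 := by
    have : (0:ℝ) ≤ 4 * ε / τ := by positivity
    linarith
  refine ⟨1, ((2:ℝ) ^ (m + 1)) ^ (ε + τ), one_pos, by positivity, 2 ^ (t0 * m), ?_⟩
  intro n hn
  have hn1 : 1 ≤ n := le_trans (Nat.one_le_two_pow) hn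
  set t' : ℕ := max t0 (Nat.clog 2 n / m + 1) with ht'_def
  set t : ℕ := ⌈ε * t' * m / ((m:ℝ) - 1)⌉₊ with ht_def
  have ht'0 : t0 ≤ t' := le_max_left _ _
  have ht'1 : 1 ≤ t' := by omega
  have hAM2 : m * m ≤ t' := by omega
  have hA4 : (4:ℝ) / τ ≤ (t':ℝ) := by
    have h1 := Nat.le_ceil (4 / τ)
    have h2 : (⌈4/τ⌉₊ : ℕ) ≤ t' := by omega
    have h3 : ((⌈4/τ⌉₊ : ℕ) : ℝ) ≤ (t' : ℝ) := by exact_mod_cast h2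
    linarith
  have hAM2r : (m:ℝ) * m ≤ (t':ℝ) := by exact_mod_cast hAM2
  have hA1 : (1:ℝ) ≤ (t':ℝ) := by exact_mod_cast ht'1
  have hMr2 : (2:ℝ) ≤ (m:ℝ) := by exact_mod_cast hm2
  -- bounds on t
  have hD0 : (0:ℝ) ≤ ε * t' * m / ((m:ℝ) - 1) := by
    apply div_nonneg _ (le_of_lt hMpos)
    have h1 : (0:ℝ) ≤ (t':ℝ) := by linarith
    have h2 : (0:ℝ) ≤ (m:ℝ) := by linarith
    exact mul_nonneg (mul_nonneg hε0.le h1) h2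
  have hT1 : ε * t' * m / ((m:ℝ) - 1) ≤ (t:ℝ) := Nat.le_ceil _
  have hT2 : (t:ℝ) < ε * t' * m / ((m:ℝ) - 1) + 1 := by
    rw [ht_def]
    exact Nat.ceil_lt_add_one hD0
  have hK1 : ε * ((t':ℝ) * m) ≤ (t:ℝ) * ((m:ℝ) - 1) := by
    have := (div_le_iff₀ hMpos).mp hT1
    linarith
  have hT2' : ((t:ℝ) - 1) * ((m:ℝ) - 1) < ε * t' * m := by
    have h1 : (t:ℝ) - 1 < ε * t' * m / ((m:ℝ) - 1) := by linarith
    exact (lt_div_iff₀ hMpos).mp h1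
  have hMτ : 4 * ε ≤ τ * ((m:ℝ) - 1) := by
    have h1 : 4 * ε / τ ≤ (m:ℝ) - 1 := by linarith
    calc 4 * ε = (4 * ε / τ) * τ := by field_simp
      _ ≤ ((m:ℝ) - 1) * τ := mul_le_mul_of_nonneg_right h1 hτ.le
      _ = τ * ((m:ℝ) - 1) := mul_comm _ _
  have hAτ : (4:ℝ) ≤ τ * (t':ℝ) := by
    calc (4:ℝ) = (4 / τ) * τ := by field_simp
      _ ≤ (t':ℝ) * τ := mul_le_mul_of_nonneg_right hA4 hτ.le
      _ = τ * (t':ℝ) := mul_comm _ _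
  have hK2 : (t:ℝ) * ((m:ℝ) + 1) ≤ (ε + τ) * ((t':ℝ) * m) := by
    nlinarith [mul_nonneg (mul_nonneg (le_of_lt hε0) (by linarith : (0:ℝ) ≤ (t':ℝ))) (by linarith : (0:ℝ) ≤ (m:ℝ)),
      mul_le_mul_of_nonneg_right hMτ (mul_nonneg (by linarith : (0:ℝ) ≤ (t':ℝ)) (by linarith : (0:ℝ) ≤ (m:ℝ))),
      mul_le_mul_of_nonneg_right hAτ (mul_nonneg (by linarith : (0:ℝ) ≤ (m:ℝ)) (by linarith : (0:ℝ) ≤ (m:ℝ) - 1)),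
      hT2', hMpos, hε, hτ]
  -- t ≥ t' + m
  have hF3r : ((t':ℝ) + m) * ((m:ℝ) - 1) ≤ (t:ℝ) * ((m:ℝ) - 1) := by
    nlinarith [hK1, hAM2r, hε, hMpos, hA1]
  have hF3 : t' + m ≤ t := by
    have h1 : ((t':ℝ) + m) ≤ (t:ℝ) := le_of_mul_le_mul_right hF3r hMpos
    exact_mod_cast h1
  have ht1 : 1 ≤ t := by omega
  -- the degree condition
  have hdeg : m * (2 ^ t' - 1) < 2 ^ t - 1 := by
    have hpow : 2 ^ (t' + m) ≤ 2 ^ t := Nat.pow_le_pow_right (by norm_num) hF3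
    have hsplit : 2 ^ (t' + m) = 2 ^ t' * 2 ^ m := pow_add 2 t' m
    have h2m : m + 2 ≤ 2 ^ m := two_pow_ge_add_two m hm2
    have hA1' : (1:ℕ) ≤ 2 ^ t' := Nat.one_le_two_pow
    have key : m * (2 ^ t' - 1) + 2 ≤ 2 ^ t := by
      have h5 : 2 ^ t' * (m + 2) ≤ 2 ^ t' * 2 ^ m := Nat.mul_le_mul_left _ h2m
      have h6 : m * (2 ^ t' - 1) + 2 ≤ 2 ^ t' * (m + 2) := by
        have h7 : m * (2 ^ t' - 1) ≤ m * 2 ^ t' := Nat.mul_le_mul_left _ (Nat.sub_le _ _)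
        have h8 : 2 ^ t' * (m + 2) = m * 2 ^ t' + 2 * 2 ^ t' := by ring
        omega
      omega
    omega
  -- the code
  have hcode := pir_gf m t' t hm2 ht'1 ht1 hdeg
  -- n fits
  have hfit : n ≤ 2 ^ (t' * m) := by
    have h1 : Nat.clog 2 n ≤ t' * m := by
      have hdm := Nat.div_add_mod (Nat.clog 2 n) m
      have hmod := Nat.mod_lt (Nat.clog 2 n) (show 0 < m by omega)
      have h2 : Nat.clog 2 n ≤ (Nat.clog 2 n / m + 1) * m := by
        have h9 : (Nat.clog 2 n / m + 1) * m = m * (Nat.clog 2 n / m) + m := by ring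
        omega
      have h3 : (Nat.clog 2 n / m + 1) * m ≤ t' * m :=
        Nat.mul_le_mul_right _ (le_max_right _ _)
      omega
    calc n ≤ 2 ^ Nat.clog 2 n := Nat.le_pow_clog (by norm_num) n
      _ ≤ 2 ^ (t' * m) := Nat.pow_le_pow_right (by norm_num) h1
  have hcode' := pir_pad (ZMod 2) hfit hcode
  -- upper bound on 2^(t'*m)
  have hupper : 2 ^ (t' * m) ≤ 2 ^ (m + 1) * n := by
    rcases max_cases t0 (Nat.clog 2 n / m + 1) with ⟨hmax, _⟩ | ⟨hmax, _⟩
    · rw [ht'_def, hmax]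
      calc 2 ^ (t0 * m) ≤ n := hn
        _ ≤ 2 ^ (m + 1) * n := Nat.le_mul_of_pos_left _ (by positivity)
    · rw [ht'_def, hmax]
      have h1 : (Nat.clog 2 n / m + 1) * m ≤ Nat.clog 2 n + m := by
        have h10 := Nat.div_mul_le_self (Nat.clog 2 n) m
        have h9 : (Nat.clog 2 n / m + 1) * m = Nat.clog 2 n / m * m + m := by ring
        omega
      have h2 : 2 ^ Nat.clog 2 n ≤ 2 * n := by
        rcases Nat.lt_or_ge n 2 with hn2 | hn2
        · have : n = 1 := by omega
          subst this
          simp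
        · have h3 : 2 ^ (Nat.clog 2 n - 1) < n := Nat.pow_pred_clog_lt_self (by norm_num) (by omega)
          have h4 : 0 < Nat.clog 2 n := Nat.clog_pos (by norm_num) (by omega)
          have h5 : 2 ^ Nat.clog 2 n = 2 * 2 ^ (Nat.clog 2 n - 1) := by
            rw [← pow_succ']
            congr 1
            omega
          omega
      calc 2 ^ ((Nat.clog 2 n / m + 1) * m) ≤ 2 ^ (Nat.clog 2 n + m) :=
            Nat.pow_le_pow_right (by norm_num) h1
        _ = 2 ^ Nat.clog 2 n * 2 ^ m := pow_add 2 _ m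
        _ ≤ (2 * n) * 2 ^ m := Nat.mul_le_mul_right _ h2
        _ = 2 ^ (m + 1) * n := by ring
  clear_value t t' t0 m
  refine ⟨2 ^ (t' * m) + 2 ^ (t * m) * t, 2 ^ (t * (m - 1)), ?_, ?_, hcode'⟩
  · -- k bound
    rw [one_mul]
    have hb1 : ((n:ℝ)) ≤ ((2 ^ (t' * m) : ℕ) : ℝ) := by exact_mod_cast hfit
    calc (n:ℝ) ^ ε ≤ ((2 ^ (t' * m) : ℕ) : ℝ) ^ ε :=
          Real.rpow_le_rpow (by positivity) hb1 (le_of_lt hε0)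
      _ = ((2:ℝ) ^ (((t' * m : ℕ)):ℝ)) ^ ε := by
          rw [Real.rpow_natCast]
          push_cast
          ring
      _ = (2:ℝ) ^ ((((t' * m : ℕ)):ℝ) * ε) := by
          rw [Real.rpow_mul (by norm_num)]
      _ ≤ (2:ℝ) ^ (((t * (m - 1) : ℕ)):ℝ) := by
          apply Real.rpow_le_rpow_of_exponent_le one_le_two
          push_cast [Nat.cast_sub (show 1 ≤ m by omega)]
          linarith [hK1]
      _ = ((2 ^ (t * (m - 1)) : ℕ) : ℝ) := by
          rw [Real.rpow_natCast]
          push_cast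
          ring
  · -- N bound
    have hNnat : 2 ^ (t' * m) + 2 ^ (t * m) * t ≤ 2 ^ (t * m + t) := by
      have e1 : 2 ^ (t' * m) ≤ 2 ^ (t * m) :=
        Nat.pow_le_pow_right (by norm_num) (Nat.mul_le_mul_right m (by omega))
      have e2 : t + 1 ≤ 2 ^ t := Nat.lt_two_pow_self
      have e3 : 2 ^ (t * m + t) = 2 ^ (t * m) * 2 ^ t := pow_add 2 _ _
      have e4 : 2 ^ (t * m) * (t + 1) = 2 ^ (t * m) + 2 ^ (t * m) * t := by ring
      have e5 : 2 ^ (t * m) * (t + 1) ≤ 2 ^ (t * m) * 2 ^ t := Nat.mul_le_mul_left _ e2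
      omega
    calc ((2 ^ (t' * m) + 2 ^ (t * m) * t : ℕ):ℝ)
        ≤ ((2 ^ (t * m + t) : ℕ):ℝ) := by exact_mod_cast hNnat
      _ = (2:ℝ) ^ (((t * m + t : ℕ)):ℝ) := by
          rw [Real.rpow_natCast]
          push_cast
          ring
      _ ≤ (2:ℝ) ^ ((((t' * m : ℕ)):ℝ) * (ε + τ)) := by
          apply Real.rpow_le_rpow_of_exponent_le one_le_two
          push_cast
          nlinarith [hK2]
      _ = ((2:ℝ) ^ (((t' * m : ℕ)):ℝ)) ^ (ε + τ) := by
          rw [Real.rpow_mul (by norm_num)]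
      _ ≤ ((2:ℝ) ^ (m + 1) * n) ^ (ε + τ) := by
          apply Real.rpow_le_rpow (by positivity) ?_ (by linarith)
          rw [Real.rpow_natCast]
          exact_mod_cast hupper
      _ = ((2:ℝ) ^ (m + 1)) ^ (ε + τ) * (n:ℝ) ^ (ε + τ) := by
          apply Real.mul_rpow (by positivity) (by positivity)
end

section
/- For every real number ε ≥ 0.5 and every real τ > 0, there exist positive constants c_1, c_2 and an integer n_0 such that for every n ≥ n_0 there exists a binary k-batch code [N, n, k]^B with k ≥ c_1 · n^ε and length N ≤ c_2 · n^{0.5+ε+τ}. -/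
open Finset

/-- There is an `[N,n,k]` batch code over the field `F`: a systematic injective `F`-linear
encoder `E : F^n → F^N` such that every multiset request of `k` information coordinates can
be answered by `k` pairwise disjoint recovering sets. -/
def ExistsBatchCode (F : Type) [Field F] (N n k : ℕ) : Prop :=
  ∃ (h : n ≤ N) (E : (Fin n → F) →ₗ[F] (Fin N → F)),
    Function.Injective E ∧
    (∀ (x : Fin n → F) (i : Fin n), E x (Fin.castLE h i) = x i) ∧
    ∀ req : Fin k → Fin n, ∃ R : Fin k → Finset (Fin N),
      (∀ a b, a ≠ b → Disjoint (R a) (R b)) ∧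
      ∀ a, ∀ x x' : Fin n → F, (∀ c ∈ R a, E x c = E x' c) → x (req a) = x' (req a)

/-- Abstract version of a systematic batch code over arbitrary finite index types. -/
def GoodCode (F : Type) [Field F] (ι κ : Type) [Fintype ι] [Fintype κ] (k : ℕ) : Prop :=
  ∃ (E : (ι → F) →ₗ[F] (κ → F)) (g : ι → κ),
    (∀ x i, E x (g i) = x i) ∧
    ∀ req : Fin k → ι, ∃ R : Fin k → Finset κ,
      (∀ a b, a ≠ b → Disjoint (R a) (R b)) ∧
      ∀ a, ∀ x x' : ι → F, (∀ c ∈ R a, E x c = E x' c) → x (req a) = x' (req a)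

section Good

variable {F : Type} [Field F]

theorem goodCode_id (F : Type) [Field F] (ι : Type) [Fintype ι] : GoodCode F ι ι 1 := by
  classical
  refine ⟨LinearMap.id, id, fun x i => rfl, fun req => ⟨fun a => {req a}, ?_, ?_⟩⟩
  · intro a b hab; exact absurd (Subsingleton.elim a b) hab
  · intro a x x' h
    exact h (req a) (mem_singleton_self _)

theorem GoodCode.pad {ι ι' κ : Type} [Fintype ι] [Fintype ι'] [Fintype κ] {k : ℕ}
    (h : GoodCode F ι κ k) (f : ι' ↪ ι) : GoodCode F ι' κ k := by
  classical
  obtain ⟨E, g, hsys, hbatch⟩ := h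
  have hext : ∀ (x : ι' → F) (i' : ι'),
      (fun i => if hh : ∃ j, f j = i then x hh.choose else 0) (f i') = x i' := by
    intro x i'
    have hh : ∃ j, f j = f i' := ⟨i', rfl⟩
    simp only [dif_pos hh]
    have := hh.choose_spec
    have : hh.choose = i' := f.injective this
    rw [this]
  set ext : (ι' → F) →ₗ[F] (ι → F) :=
    { toFun := fun x => fun i => if hh : ∃ j, f j = i then x hh.choose else 0
      map_add' := by
        intro x y; funext i; by_cases hh : ∃ j, f j = i
        · simp [dif_pos hh]
        · simp [dif_neg hh]
      map_smul' := by
        intro c x; funext i; by_cases hh : ∃ j, f j = i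
        · simp [dif_pos hh]
        · simp [dif_neg hh] } with hextdef
  refine ⟨E ∘ₗ ext, g ∘ f, ?_, ?_⟩
  · intro x i'
    simpa [hextdef] using (hsys (ext x) (f i')).trans (hext x i')
  · intro req'
    obtain ⟨R, hdisj, hrec⟩ := hbatch (f ∘ req')
    refine ⟨R, hdisj, fun a x x' hagree => ?_⟩
    have := hrec a (ext x) (ext x') (by simpa using hagree)
    simpa [hextdef, hext] using this

theorem GoodCode.repl {ι κ : Type} [Fintype ι] [Fintype κ] {k : ℕ} (M : ℕ) (hM : 0 < M)
    (h : GoodCode F ι κ k) : GoodCode F ι (Fin M × κ) (M * k) := by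
  classical
  obtain ⟨E, g, hsys, hbatch⟩ := h
  refine ⟨(LinearMap.funLeft F F Prod.snd) ∘ₗ E, fun i => (⟨0, hM⟩, g i), ?_, ?_⟩
  · intro x i; simpa [LinearMap.funLeft] using hsys x i
  · intro req
    rcases Nat.eq_zero_or_pos k with hk | hk
    · subst hk
      refine ⟨fun a => absurd (by simpa using a.2) (Nat.not_lt_zero (a : ℕ)), ?_, ?_⟩ <;>
        · intro a; exact absurd (by simpa using a.2) (Nat.not_lt_zero (a : ℕ))
    -- k > 0
    have hjk : ∀ (j : Fin M) (i : Fin k), k * (j : ℕ) + (i : ℕ) < M * k := by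
      intro j i
      have h1 : (j : ℕ) + 1 ≤ M := j.2
      have : k * (j : ℕ) + (i : ℕ) < k * ((j : ℕ) + 1) := by
        have := i.2; nlinarith
      calc k * (j : ℕ) + (i : ℕ) < k * ((j : ℕ) + 1) := this
        _ ≤ k * M := Nat.mul_le_mul_left _ h1
        _ = M * k := Nat.mul_comm _ _
    set reqj : Fin M → Fin k → ι := fun j i => req ⟨k * (j : ℕ) + (i : ℕ), hjk j i⟩ with hreqj
    choose R hRdisj hRrec using fun j => hbatch (reqj j)
    have hdiv : ∀ a : Fin (M * k), (a : ℕ) / k < M := by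
      intro a
      apply Nat.div_lt_of_lt_mul
      rw [Nat.mul_comm k M]
      exact a.2
    have hmod : ∀ a : Fin (M * k), (a : ℕ) % k < k := fun a => Nat.mod_lt _ hk
    set J : Fin (M * k) → Fin M := fun a => ⟨(a : ℕ) / k, hdiv a⟩ with hJ
    set I : Fin (M * k) → Fin k := fun a => ⟨(a : ℕ) % k, hmod a⟩ with hI
    have hreq : ∀ a : Fin (M * k), reqj (J a) (I a) = req a := by
      intro a
      simp only [hreqj]
      congr 1
      ext
      simp [hJ, hI, Nat.div_add_mod]
    refine ⟨fun a => (R (J a) (I a)).image (fun c => (J a, c)), ?_, ?_⟩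
    · intro a b hab
      rw [Finset.disjoint_left]
      rintro ⟨j, c⟩ hca hcb
      simp only [Finset.mem_image] at hca hcb
      obtain ⟨ca, hca1, hca2⟩ := hca
      obtain ⟨cb, hcb1, hcb2⟩ := hcb
      have hja : J a = j := (Prod.mk.injEq _ _ _ _).mp hca2 |>.1
      have hjb : J b = j := (Prod.mk.injEq _ _ _ _).mp hcb2 |>.1
      have hcaa : ca = c := (Prod.mk.injEq _ _ _ _).mp hca2 |>.2
      have hcbb : cb = c := (Prod.mk.injEq _ _ _ _).mp hcb2 |>.2
      have hJab : J a = J b := hja.trans hjb.symm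
      rw [hcaa] at hca1
      rw [hcbb, ← hJab] at hcb1
      have hIab : I a ≠ I b := by
        intro hI'
        apply hab
        have h1 : k * ((a:ℕ)/k) + (a:ℕ) % k = (a : ℕ) := Nat.div_add_mod _ _
        have h2 : k * ((b:ℕ)/k) + (b:ℕ) % k = (b : ℕ) := Nat.div_add_mod _ _
        have hJ' : (a : ℕ) / k = (b : ℕ) / k := congrArg Fin.val hJab
        have hI'' : (a : ℕ) % k = (b : ℕ) % k := congrArg Fin.val hI'
        rw [hJ', hI''] at h1
        ext
        omega
      exact (Finset.disjoint_left.mp (hRdisj (J a) _ _ hIab) hca1 hcb1).elim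
    · intro a x x' hagree
      rw [← hreq a]
      apply hRrec (J a) (I a) x x'
      intro c hc
      have := hagree (J a, c) (Finset.mem_image_of_mem _ hc)
      simpa using this

theorem GoodCode.toExists {ι κ : Type} [Fintype ι] [Fintype κ] {k N n : ℕ}
    (F : Type) [Field F] (h : GoodCode F ι κ k) (hn : Fintype.card ι = n)
    (hN : Fintype.card κ = N) : ExistsBatchCode F N n k := by
  classical
  obtain ⟨E, g, hsys, hbatch⟩ := h
  have ginj : Function.Injective g := by
    intro i j hij
    by_contra hne
    have h1 : E (Pi.single i (1 : F)) (g i) = 1 := by rw [hsys]; simp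
    have h2 : E (Pi.single i (1 : F)) (g j) = 0 := by rw [hsys]; simp [Pi.single_eq_of_ne (Ne.symm hne)]
    rw [hij] at h1
    rw [h1] at h2
    exact one_ne_zero h2
  have hle : n ≤ N := by
    rw [← hn, ← hN]; exact Fintype.card_le_of_injective g ginj
  have eι : Fin n ≃ ι := (Fintype.equivFinOfCardEq hn).symm
  set f : Fin n → κ := g ∘ eι with hf
  have finj : Function.Injective f := ginj.comp eι.injective
  set s : Set κ := Set.range f with hs
  set e1 : Fin n ≃ s := Equiv.ofInjective f finj with he1
  have hcards : Fintype.card s = n :=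
    (Fintype.card_congr e1.symm).trans (Fintype.card_fin n)
  have hcardsc : Fintype.card (↥sᶜ) = N - n := by
    rw [Fintype.card_compl_set, hcards, hN]
  have e2 : Fin (N - n) ≃ ↥sᶜ := (Fintype.equivFinOfCardEq hcardsc).symm
  have hNn : n + (N - n) = N := Nat.add_sub_cancel' hle
  set eκ : Fin N ≃ κ :=
    (finCongr hNn.symm).trans ((finSumFinEquiv.symm).trans
      ((Equiv.sumCongr e1 e2).trans (Equiv.Set.sumCompl s))) with heκ
  have hkey : ∀ i : Fin n, eκ (Fin.castLE hle i) = g (eι i) := by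
    intro i
    have h1 : (finCongr hNn.symm) (Fin.castLE hle i) = Fin.castAdd (N - n) i := by
      ext; simp
    simp only [heκ, Equiv.trans_apply, h1, finSumFinEquiv_symm_apply_castAdd,
      Equiv.sumCongr_apply, Sum.map_inl, Equiv.Set.sumCompl_apply_inl]
    show ((e1 i : s) : κ) = g (eι i)
    rw [Equiv.ofInjective_apply]
    rfl
  set E' : (Fin n → F) →ₗ[F] (Fin N → F) :=
    (LinearMap.funLeft F F eκ) ∘ₗ E ∘ₗ (LinearMap.funLeft F F eι.symm) with hE'
  have hsys' : ∀ (x : Fin n → F) (i : Fin n), E' x (Fin.castLE hle i) = x i := by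
    intro x i
    simp only [hE', LinearMap.comp_apply, LinearMap.funLeft_apply, Function.comp_apply]
    rw [hkey i, hsys]
    simp
  refine ⟨hle, E', ?_, hsys', ?_⟩
  · intro x x' hxx
    funext i
    have := congrFun hxx (Fin.castLE hle i)
    rwa [hsys', hsys'] at this
  · intro req
    obtain ⟨R, hdisj, hrec⟩ := hbatch (fun a => eι (req a))
    refine ⟨fun a => (R a).image eκ.symm, ?_, ?_⟩
    · intro a b hab
      rw [Finset.disjoint_left]
      intro c hca hcb
      simp only [Finset.mem_image] at hca hcb
      obtain ⟨ca, hca1, hca2⟩ := hca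
      obtain ⟨cb, hcb1, hcb2⟩ := hcb
      have : ca = cb := by
        have := hca2.trans hcb2.symm
        exact eκ.symm.injective this
      subst this
      exact (Finset.disjoint_left.mp (hdisj a b hab) hca1 hcb1).elim
    · intro a x x' hagree
      have := hrec a (x ∘ eι.symm) (x' ∘ eι.symm) ?_
      · simpa using this
      intro c hc
      have hmem : eκ.symm c ∈ (R a).image eκ.symm := Finset.mem_image_of_mem _ hc
      have := hagree (eκ.symm c) hmem
      exact (by simpa [hE'] using this : E ((LinearMap.funLeft F F ⇑eι.symm) x) c = E ((LinearMap.funLeft F F ⇑eι.symm) x') c)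

end Good


set_option maxHeartbeats 1600000

private lemma sum_div_le {α : Type*} (s : Finset α) (f : α → ℕ) (d : ℕ) (hd : 0 < d) :
    (∑ p ∈ s, f p / d) ≤ (∑ p ∈ s, f p) / d := by
  rw [Nat.le_div_iff_mul_le hd, Finset.sum_mul]
  exact Finset.sum_le_sum fun p _ => Nat.div_mul_le_self _ _

private lemma arith1 (q k0 K lam : ℕ) (h8K : 8 * K ≤ q * k0) (hlam : q ≤ 2 * lam)
    (hlampos : 0 < lam) : K < (k0 / 3 + 1) * lam := by
  have hf1 : k0 ≤ 3 * (k0 / 3) + 2 := by omega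
  have hf3 : q * k0 ≤ (2 * lam) * (3 * (k0 / 3) + 2) := Nat.mul_le_mul hlam hf1
  have h8 : 8 * K < 8 * ((k0 / 3 + 1) * lam) := by nlinarith
  omega

theorem GoodCode.gadget {F : Type} [Field F] {ι0 κ0 : Type} [Fintype ι0] [Fintype κ0]
    {k0 : ℕ} (q : ℕ) [NeZero q] (hq : Nat.Prime q) (hq8 : 8 ≤ q) (hk8 : 8 * q ≤ k0)
    (h : GoodCode F ι0 κ0 k0) :
    GoodCode F ((ZMod q × ZMod q) × ι0) (((ZMod q × ZMod q) ⊕ (ZMod q × ZMod q)) × κ0)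
      (q * k0 / 8) := by
  classical
  haveI : Fact (Nat.Prime q) := ⟨hq⟩
  obtain ⟨E0, g0, hsys0, hbatch0⟩ := h
  set P := ZMod q × ZMod q with hP
  -- the slice of input feeding block β
  set slice : (P ⊕ P) → ((P × ι0) → F) →ₗ[F] (ι0 → F) :=
    Sum.elim (fun p => LinearMap.funLeft F F (fun i => (p, i)))
      (fun ab => ∑ u : ZMod q, LinearMap.funLeft F F (fun i => ((u, ab.1 * u + ab.2), i)))
    with hslice
  set E : ((P × ι0) → F) →ₗ[F] (((P ⊕ P) × κ0) → F) :=
    LinearMap.pi (fun c => (LinearMap.proj c.2) ∘ₗ E0 ∘ₗ slice c.1) with hE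
  have hEapp : ∀ x β t, E x (β, t) = E0 (slice β x) t := fun x β t => rfl
  have hsliceinl : ∀ (x : (P × ι0) → F) p i, slice (Sum.inl p) x i = x (p, i) := fun x p i => rfl
  have hsliceinr : ∀ (x : (P × ι0) → F) ab i,
      slice (Sum.inr ab) x i = ∑ u : ZMod q, x ((u, ab.1 * u + ab.2), i) := by
    intro x ab i
    simp [hslice, LinearMap.sum_apply, Finset.sum_apply, LinearMap.funLeft]
  set K := q * k0 / 8 with hK
  have hk0pos : 0 < k0 := by omega
  have hqpos : 0 < q := by omega
  have hKq : q * q ≤ K := by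
    rw [hK, Nat.le_div_iff_mul_le (by norm_num : (0:ℕ) < 8)]
    calc q * q * 8 = q * (8 * q) := by ring
      _ ≤ q * k0 := Nat.mul_le_mul_left _ hk8
  have hKpos : 0 < K := lt_of_lt_of_le (by positivity) hKq
  refine ⟨E, fun pi => (Sum.inl pi.1, g0 pi.2), ?_, ?_⟩
  · intro x pi
    rw [hEapp, hsys0, hsliceinl]
  intro req
  have h8K : 8 * K ≤ q * k0 := by rw [hK]; omega
  -- fibers and heaviness
  set fiber : P → Finset (Fin K) := fun p => univ.filter (fun a => (req a).1 = p) with hfiber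
  set r : P → ℕ := fun p => (fiber p).card with hr
  have hsumr : ∑ p : P, r p = K := by
    rw [hr]
    have := Finset.card_eq_sum_card_fiberwise
      (f := fun a : Fin K => (req a).1) (s := univ) (t := univ) (fun x _ => mem_univ _)
    simpa [hfiber] using this.symm
  set H : Finset P := univ.filter (fun p => k0 / 2 < r p) with hH
  set lam := q - q / 2 with hlam
  have hlampos : 0 < lam := by omega
  have hHcard : H.card ≤ q / 2 := by
    by_contra hcon
    push_neg at hcon
    have h1 : ∀ p ∈ H, k0 / 2 + 1 ≤ r p := by
      intro p hp
      have := (mem_filter.mp hp).2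
      omega
    have h2 : H.card * (k0 / 2 + 1) ≤ ∑ p ∈ H, r p := by
      calc H.card * (k0 / 2 + 1) = ∑ _p ∈ H, (k0 / 2 + 1) := by
            rw [Finset.sum_const, smul_eq_mul]
        _ ≤ ∑ p ∈ H, r p := Finset.sum_le_sum h1
    have h3 : ∑ p ∈ H, r p ≤ K := by
      rw [← hsumr]
      exact Finset.sum_le_sum_of_subset (subset_univ H)
    have h4 : (q / 2 + 1) * (k0 / 2 + 1) ≤ K :=
      le_trans (Nat.mul_le_mul_right _ (by omega)) (le_trans h2 h3)
    have e1 : q ≤ 2 * (q / 2) + 1 := by omega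
    have e2 : k0 ≤ 2 * (k0 / 2) + 1 := by omega
    have e3 : q * k0 ≤ (2 * (q / 2) + 1) * (2 * (k0 / 2) + 1) := Nat.mul_le_mul e1 e2
    nlinarith [h8K, h4, e3]
  -- available rounds
  set onLine : P → P → ZMod q → Prop :=
    fun p' p α => p'.2 - p.2 = α * (p'.1 - p.1) with honLine
  set Av : P → Finset (ZMod q) :=
    fun p => univ.filter (fun α => ∀ p' ∈ H, p' ≠ p → ¬ onLine p' p α) with hAv
  have hAvcard : ∀ p, lam ≤ (Av p).card := by
    intro p
    have hsub : univ \ Av p ⊆ (H.erase p).image (fun p' => (p'.2 - p.2) * (p'.1 - p.1)⁻¹) := by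
      intro α hα
      rw [mem_sdiff] at hα
      have hnot : ¬ (∀ p' ∈ H, p' ≠ p → ¬ onLine p' p α) := by
        intro hcon
        exact hα.2 (mem_filter.mpr ⟨mem_univ _, hcon⟩)
      push_neg at hnot
      obtain ⟨p', hp'H, hp'ne, honl⟩ := hnot
      have honl' : p'.2 - p.2 = α * (p'.1 - p.1) := honl
      have hd1 : p'.1 - p.1 ≠ 0 := by
        intro h0
        apply hp'ne
        have hfst : p'.1 = p.1 := by rwa [sub_eq_zero] at h0
        have hsnd : p'.2 = p.2 := by
          rw [h0, mul_zero] at honl'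
          rwa [sub_eq_zero] at honl'
        exact Prod.ext hfst hsnd
      refine mem_image.mpr ⟨p', mem_erase.mpr ⟨hp'ne, hp'H⟩, ?_⟩
      rw [honl']
      exact mul_inv_cancel_right₀ hd1 α
    have h1 : (univ \ Av p).card ≤ H.card := by
      calc (univ \ Av p).card ≤ ((H.erase p).image _).card := card_le_card hsub
        _ ≤ (H.erase p).card := card_image_le
        _ ≤ H.card := card_le_card (erase_subset _ _)
    have h2 : (univ \ Av p).card = q - (Av p).card := by
      rw [card_sdiff_of_subset (subset_univ _), card_univ, ZMod.card]
    have h3 : (Av p).card ≤ q := by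
      calc (Av p).card ≤ Fintype.card (ZMod q) := card_le_univ _
        _ = q := ZMod.card q
    omega
  -- ranks within fibers
  set rnk : Fin K → ℕ :=
    fun a => ((fiber (req a).1).filter (fun a' => a' < a)).card with hrnk
  have hrnk_lt : ∀ a, rnk a < r (req a).1 := by
    intro a
    have hmem : a ∈ fiber (req a).1 := mem_filter.mpr ⟨mem_univ _, rfl⟩
    have hss : (fiber (req a).1).filter (fun a' => a' < a) ⊂ fiber (req a).1 :=
      (Finset.ssubset_iff_of_subset (filter_subset _ _)).mpr
        ⟨a, hmem, by simp⟩
    exact card_lt_card hss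
  have hrnk_key : ∀ a b : Fin K, (req a).1 = (req b).1 → a < b → rnk a < rnk b := by
    intro a b hab hlt
    have hss : (fiber (req a).1).filter (fun a' => a' < a) ⊂
        (fiber (req b).1).filter (fun a' => a' < b) := by
      rw [hab]
      refine (Finset.ssubset_iff_of_subset ?_).mpr ⟨a, ?_, by simp⟩
      · intro c hc
        rw [mem_filter] at hc ⊢
        exact ⟨hc.1, lt_trans hc.2 hlt⟩
      · rw [mem_filter]
        exact ⟨mem_filter.mpr ⟨mem_univ _, hab⟩, hlt⟩
    exact card_lt_card hss
  have hrnk_inj : ∀ a b, (req a).1 = (req b).1 → a ≠ b → rnk a ≠ rnk b := by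
    intro a b hab hne
    rcases lt_or_gt_of_ne hne with hlt | hlt
    · exact Nat.ne_of_lt (hrnk_key a b hab hlt)
    · exact (Nat.ne_of_lt (hrnk_key b a hab.symm hlt)).symm
  set quota : P → ℕ := fun p => r p / lam + 1 with hquota
  set chunk : Fin K → ℕ := fun a => rnk a / quota (req a).1 with hchunk
  have hquotapos : ∀ p, 0 < quota p := fun p => Nat.succ_pos _
  have hchunk_lt : ∀ a, chunk a < lam := by
    intro a
    have h2 := hrnk_lt a
    have hmod := Nat.mod_lt (r (req a).1) hlampos
    have hdm := Nat.div_add_mod (r (req a).1) lam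
    have h1 : rnk a < quota (req a).1 * lam := by
      have hqm : quota (req a).1 * lam = lam * (r (req a).1 / lam) + lam := by
        show (r (req a).1 / lam + 1) * lam = _
        ring
      omega
    have h1x : rnk a < lam * quota (req a).1 := by rwa [Nat.mul_comm] at h1
    exact (Nat.div_lt_iff_lt_mul (hquotapos _)).mpr h1x
  set pick : P → ℕ → ZMod q := fun p t =>
    if h : t < (Av p).card then ((Av p).equivFin.symm ⟨t, h⟩ : ↥(Av p)).1 else 0 with hpick
  have hpick_mem : ∀ p t, t < (Av p).card → pick p t ∈ Av p := by
    intro p t ht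
    rw [hpick]
    simp only [dif_pos ht]
    exact ((Av p).equivFin.symm ⟨t, ht⟩).2
  have hpick_inj : ∀ p t t', t < (Av p).card → t' < (Av p).card →
      pick p t = pick p t' → t = t' := by
    intro p t t' ht ht' hh
    rw [hpick] at hh
    simp only [dif_pos ht, dif_pos ht'] at hh
    have h2 := (Av p).equivFin.symm.injective (Subtype.ext hh)
    exact congrArg Fin.val h2
  set roundOf : Fin K → ZMod q := fun a => pick (req a).1 (chunk a) with hroundOf
  have hchunkcard : ∀ a, chunk a < (Av (req a).1).card :=
    fun a => lt_of_lt_of_le (hchunk_lt a) (hAvcard _)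
  have hround_mem : ∀ a, roundOf a ∈ Av (req a).1 := fun a => hpick_mem _ _ (hchunkcard a)
  set bOf : Fin K → ZMod q := fun a => (req a).1.2 - roundOf a * (req a).1.1 with hbOf
  -- which blocks a request touches
  set touches : Fin K → (P ⊕ P) → Prop := fun a =>
    Sum.elim
      (fun p' => ((req a).1 ∈ H ∧ p' ≠ (req a).1 ∧ p'.2 = roundOf a * p'.1 + bOf a) ∨
        ((req a).1 ∉ H ∧ p' = (req a).1))
      (fun ab => (req a).1 ∈ H ∧ ab.1 = roundOf a ∧ ab.2 = bOf a) with htouches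
  set A : (P ⊕ P) → Finset (Fin K) := fun β => univ.filter (fun a => touches a β) with hA
  -- quota bound per (block p, round α)
  have hLq : ∀ p α, ((fiber p).filter (fun a => roundOf a = α)).card ≤ quota p := by
    intro p α
    set s := (fiber p).filter (fun a => roundOf a = α) with hsdef
    rcases s.eq_empty_or_nonempty with he | hne
    · rw [he]; simp
    obtain ⟨a0, ha0⟩ := hne
    have ha0f : a0 ∈ fiber p := (mem_filter.mp ha0).1
    have hp0 : (req a0).1 = p := (mem_filter.mp ha0f).2
    have hsame : ∀ a ∈ s, chunk a = chunk a0 ∧ (req a).1 = p := by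
      intro a ha
      have haf := (mem_filter.mp ha).1
      have hpa : (req a).1 = p := (mem_filter.mp haf).2
      have h1 : roundOf a = roundOf a0 :=
        ((mem_filter.mp ha).2).trans ((mem_filter.mp ha0).2).symm
      have hca : chunk a < (Av p).card := by rw [← hpa]; exact hchunkcard a
      have hca0 : chunk a0 < (Av p).card := by rw [← hp0]; exact hchunkcard a0
      have hpp : pick p (chunk a) = pick p (chunk a0) := by
        have e1 : roundOf a = pick p (chunk a) := by
          show pick (req a).1 (chunk a) = pick p (chunk a)
          rw [hpa]
        have e2 : roundOf a0 = pick p (chunk a0) := by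
          show pick (req a0).1 (chunk a0) = pick p (chunk a0)
          rw [hp0]
        rw [← e1, ← e2]
        exact h1
      exact ⟨hpick_inj p _ _ hca hca0 hpp, hpa⟩
    have hinj : Set.InjOn rnk ↑s := by
      intro a ha b hb hab
      by_contra hne
      exact hrnk_inj a b (((hsame a ha).2).trans ((hsame b hb).2).symm) hne hab
    have hsub : ∀ a ∈ s, rnk a ∈
        Finset.Ico (chunk a0 * quota p) (chunk a0 * quota p + quota p) := by
      intro a ha
      obtain ⟨hch, hpa⟩ := hsame a ha
      have hdivc : rnk a / quota p = chunk a0 := by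
        rw [← hch]
        show rnk a / quota p = rnk a / quota (req a).1
        rw [hpa]
      rw [mem_Ico]
      have hdm := Nat.div_add_mod (rnk a) (quota p)
      have hmlt := Nat.mod_lt (rnk a) (hquotapos p)
      constructor
      · calc chunk a0 * quota p = (rnk a / quota p) * quota p := by rw [hdivc]
          _ ≤ rnk a := Nat.div_mul_le_self _ _
      · calc rnk a = quota p * (rnk a / quota p) + rnk a % quota p := hdm.symm
          _ = quota p * chunk a0 + rnk a % quota p := by rw [hdivc]
          _ < quota p * chunk a0 + quota p := by omega
          _ = chunk a0 * quota p + quota p := by ring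
    have hcard := Finset.card_le_card_of_injOn rnk hsub hinj
    rwa [Nat.card_Ico, Nat.add_sub_cancel_left] at hcard
  have hQH : ∑ p ∈ H, quota p ≤ k0 / 3 + q / 2 := by
    have hstep : ∑ p ∈ H, quota p = (∑ p ∈ H, r p / lam) + H.card := by
      show ∑ p ∈ H, (r p / lam + 1) = _
      rw [Finset.sum_add_distrib, Finset.sum_const, smul_eq_mul, mul_one]
    have h1 : (∑ p ∈ H, r p / lam) ≤ (∑ p ∈ H, r p) / lam := sum_div_le _ _ _ hlampos
    have h2 : (∑ p ∈ H, r p) ≤ K := by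
      rw [← hsumr]; exact Finset.sum_le_sum_of_subset (subset_univ H)
    have h3 : (∑ p ∈ H, r p) / lam ≤ K / lam := Nat.div_le_div_right h2
    have h4 : K / lam ≤ k0 / 3 := by
      have hKlt : K < (k0 / 3 + 1) * lam := arith1 q k0 K lam h8K (by omega) hlampos
      have := (Nat.div_lt_iff_lt_mul hlampos).mpr hKlt
      omega
    omega
  -- a request in a fiber of a heavy point lies on the chosen line: unique slope
  have hslope : ∀ (a : Fin K) (p p' : ZMod q × ZMod q), (req a).1 = p → p ∈ H → p' ∉ H →
      p' ≠ (req a).1 → p'.2 = roundOf a * p'.1 + bOf a →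
      roundOf a = (p'.2 - p.2) * (p'.1 - p.1)⁻¹ := by
    intro a p p' hpa hpH hp'H hne honl2
    have honl3 : p'.2 - p.2 = roundOf a * (p'.1 - p.1) := by
      rw [honl2]
      simp only [hbOf]
      rw [hpa]
      ring
    have hd1 : p'.1 - p.1 ≠ 0 := by
      intro h0
      have hfst : p'.1 = p.1 := by rwa [sub_eq_zero] at h0
      have hsnd : p'.2 = p.2 := by
        rw [h0, mul_zero] at honl3
        rwa [sub_eq_zero] at honl3
      exact hp'H (Prod.ext hfst hsnd ▸ hpH)
    rw [honl3]
    exact (mul_inv_cancel_right₀ hd1 _).symm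
  have hcardA : ∀ β, (A β).card ≤ k0 := by
    intro β
    rcases β with p' | ab
    · -- info block
      by_cases hp'H : p' ∈ H
      · -- heavy info blocks receive no demands
        have hempty : A (Sum.inl p') = ∅ := by
          rw [Finset.eq_empty_iff_forall_notMem]
          intro a ha
          have htch : ((req a).1 ∈ H ∧ p' ≠ (req a).1 ∧ p'.2 = roundOf a * p'.1 + bOf a) ∨
              ((req a).1 ∉ H ∧ p' = (req a).1) := (mem_filter.mp ha).2
          rcases htch with ⟨hh, hne, honl2⟩ | ⟨hl, hpe⟩
          · -- chosen rounds avoid heavy points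
            have hmem := hround_mem a
            have havoid : ∀ p'' ∈ H, p'' ≠ (req a).1 →
                ¬ onLine p'' (req a).1 (roundOf a) := (mem_filter.mp hmem).2
            apply havoid p' hp'H hne
            show p'.2 - (req a).1.2 = roundOf a * (p'.1 - (req a).1.1)
            rw [honl2]
            show roundOf a * p'.1 + ((req a).1.2 - roundOf a * (req a).1.1) - (req a).1.2 = _
            ring
          · exact hl (hpe ▸ hp'H)
        rw [hempty]
        simp
      · -- light info block
        have hsplit := Finset.card_filter_add_card_filter_not
          (s := A (Sum.inl p')) (p := fun a => (req a).1 ∈ H)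
        have hlight : ((A (Sum.inl p')).filter (fun a => ¬ (req a).1 ∈ H)).card ≤ k0 / 2 := by
          have hsubl : (A (Sum.inl p')).filter (fun a => ¬ (req a).1 ∈ H) ⊆ fiber p' := by
            intro a ha
            rw [mem_filter] at ha
            have htch : ((req a).1 ∈ H ∧ p' ≠ (req a).1 ∧ p'.2 = roundOf a * p'.1 + bOf a) ∨
                ((req a).1 ∉ H ∧ p' = (req a).1) := (mem_filter.mp ha.1).2
            rcases htch with ⟨hh, _, _⟩ | ⟨_, hpe⟩
            · exact absurd hh ha.2
            · exact mem_filter.mpr ⟨mem_univ _, hpe.symm⟩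
          have hrp' : r p' ≤ k0 / 2 := by
            by_contra hcc
            exact hp'H (mem_filter.mpr ⟨mem_univ _, by omega⟩)
          exact le_trans (card_le_card hsubl) hrp'
        have hheavy : ((A (Sum.inl p')).filter (fun a => (req a).1 ∈ H)).card ≤
            k0 / 3 + q / 2 := by
          set AH := (A (Sum.inl p')).filter (fun a => (req a).1 ∈ H) with hAH
          have hfw : AH.card = ∑ p ∈ H, (AH.filter (fun a => (req a).1 = p)).card :=
            Finset.card_eq_sum_card_fiberwise (fun a ha => (mem_filter.mp ha).2)
          have hbound : ∀ p ∈ H, (AH.filter (fun a => (req a).1 = p)).card ≤ quota p := by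
            intro p hpH
            have hsub2 : AH.filter (fun a => (req a).1 = p) ⊆
                (fiber p).filter (fun a => roundOf a = (p'.2 - p.2) * (p'.1 - p.1)⁻¹) := by
              intro a ha
              rw [mem_filter] at ha
              have hpa : (req a).1 = p := ha.2
              have haA := (mem_filter.mp ha.1).1
              have htch : ((req a).1 ∈ H ∧ p' ≠ (req a).1 ∧
                  p'.2 = roundOf a * p'.1 + bOf a) ∨
                  ((req a).1 ∉ H ∧ p' = (req a).1) := (mem_filter.mp haA).2
              rcases htch with ⟨hh, hne, honl2⟩ | ⟨hl, _⟩
              · refine mem_filter.mpr ⟨mem_filter.mpr ⟨mem_univ _, hpa⟩, ?_⟩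
                exact hslope a p p' hpa (hpa ▸ hh) hp'H hne honl2
              · exact absurd (hpa ▸ hpH) hl
            exact le_trans (card_le_card hsub2) (hLq p _)
          calc AH.card = ∑ p ∈ H, (AH.filter (fun a => (req a).1 = p)).card := hfw
            _ ≤ ∑ p ∈ H, quota p := Finset.sum_le_sum hbound
            _ ≤ k0 / 3 + q / 2 := hQH
        omega
    · -- line block
      have hsubA : ∀ a ∈ A (Sum.inr ab), (req a).1 ∈ H := by
        intro a ha
        have htch : (req a).1 ∈ H ∧ ab.1 = roundOf a ∧ ab.2 = bOf a :=
          (mem_filter.mp ha).2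
        exact htch.1
      have hfw : (A (Sum.inr ab)).card =
          ∑ p ∈ H, ((A (Sum.inr ab)).filter (fun a => (req a).1 = p)).card :=
        Finset.card_eq_sum_card_fiberwise hsubA
      have hbound : ∀ p ∈ H,
          ((A (Sum.inr ab)).filter (fun a => (req a).1 = p)).card ≤ quota p := by
        intro p hpH
        have hsub2 : (A (Sum.inr ab)).filter (fun a => (req a).1 = p) ⊆
            (fiber p).filter (fun a => roundOf a = ab.1) := by
          intro a ha
          rw [mem_filter] at ha
          have htch : (req a).1 ∈ H ∧ ab.1 = roundOf a ∧ ab.2 = bOf a :=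
            (mem_filter.mp ha.1).2
          exact mem_filter.mpr ⟨mem_filter.mpr ⟨mem_univ _, ha.2⟩, htch.2.1.symm⟩
        exact le_trans (card_le_card hsub2) (hLq p _)
      have : (A (Sum.inr ab)).card ≤ k0 / 3 + q / 2 := by
        calc (A (Sum.inr ab)).card = _ := hfw
          _ ≤ ∑ p ∈ H, quota p := Finset.sum_le_sum hbound
          _ ≤ k0 / 3 + q / 2 := hQH
      omega
  -- slots
  set slot : (β : P ⊕ P) → (a : Fin K) → a ∈ A β → Fin k0 := fun β a ha =>
    Fin.castLE (hcardA β) ((A β).equivFin ⟨a, ha⟩) with hslot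
  have hslot_inj : ∀ β a b ha hb, slot β a ha = slot β b hb → a = b := by
    intro β a b ha hb hh
    have hv := congrArg Fin.val hh
    have h2 := (A β).equivFin.injective (Fin.ext hv)
    exact congrArg Subtype.val h2
  set reqb : (P ⊕ P) → Fin k0 → ι0 := fun β s =>
    if h : ∃ a, ∃ ha : a ∈ A β, slot β a ha = s then (req h.choose).2
    else (req ⟨0, hKpos⟩).2 with hreqb
  have hreqb_eq : ∀ β a (ha : a ∈ A β), reqb β (slot β a ha) = (req a).2 := by
    intro β a ha
    rw [hreqb]
    have hex : ∃ a', ∃ ha' : a' ∈ A β, slot β a' ha' = slot β a ha := ⟨a, ha, rfl⟩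
    simp only [dif_pos hex]
    obtain ⟨ha', hs⟩ := hex.choose_spec
    rw [hslot_inj β _ _ ha' ha hs]
  choose Rb hRbdisj hRbrec using fun β => hbatch0 (reqb β)
  set Rout : Fin K → Finset ((P ⊕ P) × κ0) := fun a =>
    univ.filter (fun c => ∃ h : a ∈ A c.1, c.2 ∈ Rb c.1 (slot c.1 a h)) with hRout
  refine ⟨Rout, ?_, ?_⟩
  · intro a b hab
    rw [Finset.disjoint_left]
    intro c hca hcb
    rw [hRout] at hca hcb
    simp only [mem_filter, mem_univ, true_and] at hca hcb
    obtain ⟨ha, hma⟩ := hca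
    obtain ⟨hb, hmb⟩ := hcb
    have hss : slot c.1 a ha ≠ slot c.1 b hb := fun hcon => hab (hslot_inj _ _ _ _ _ hcon)
    exact Finset.disjoint_left.mp (hRbdisj c.1 _ _ hss) hma hmb
  · intro a x x' hagree
    -- main recovery
    have hREC : ∀ β (ha : a ∈ A β), slice β x (req a).2 = slice β x' (req a).2 := by
      intro β ha
      have := hRbrec β (slot β a ha) (slice β x) (slice β x') ?_
      · rwa [hreqb_eq β a ha] at this
      intro t ht
      have hmem : (β, t) ∈ Rout a := by
        rw [hRout]
        simp only [mem_filter, mem_univ, true_and]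
        exact ⟨ha, ht⟩
      have := hagree (β, t) hmem
      rwa [hEapp, hEapp] at this
    by_cases hheavy : (req a).1 ∈ H
    · -- heavy case
      set p := (req a).1 with hp
      set α := roundOf a with hα
      set b := bOf a with hb
      have hin : ∀ u : ZMod q, u ≠ p.1 → a ∈ A (Sum.inl (u, α * u + b)) := by
        intro u hu
        refine mem_filter.mpr ⟨mem_univ _, ?_⟩
        exact Or.inl ⟨hheavy, fun hcon => hu (congrArg Prod.fst hcon), rfl⟩
      have hinr : a ∈ A (Sum.inr (α, b)) := by
        refine mem_filter.mpr ⟨mem_univ _, ?_⟩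
        exact ⟨hheavy, rfl, rfl⟩
      have hline : ∀ u : ZMod q, u ≠ p.1 →
          x ((u, α * u + b), (req a).2) = x' ((u, α * u + b), (req a).2) := by
        intro u hu
        have := hREC _ (hin u hu)
        rwa [hsliceinl, hsliceinl] at this
      have hsumline := hREC _ hinr
      rw [hsliceinr, hsliceinr] at hsumline
      -- subtract
      have hkey : x ((p.1, α * p.1 + b), (req a).2) = x' ((p.1, α * p.1 + b), (req a).2) := by
        have h1 := Finset.add_sum_erase univ
          (fun u : ZMod q => x ((u, α * u + b), (req a).2)) (mem_univ p.1)
        have h2 := Finset.add_sum_erase univ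
          (fun u : ZMod q => x' ((u, α * u + b), (req a).2)) (mem_univ p.1)
        have h3 : ∑ u ∈ univ.erase p.1, x ((u, α * u + b), (req a).2)
            = ∑ u ∈ univ.erase p.1, x' ((u, α * u + b), (req a).2) := by
          apply Finset.sum_congr rfl
          intro u hu
          exact hline u (Finset.ne_of_mem_erase hu)
        have := h1.trans (hsumline.trans h2.symm)
        rw [h3] at this
        exact add_right_cancel this
      have hbp : α * p.1 + b = p.2 := by
        simp only [hb, hbOf, hα, hp]
        ring
      rw [hbp] at hkey
      exact hkey
    · -- light case
      have hin : a ∈ A (Sum.inl (req a).1) := by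
        refine mem_filter.mpr ⟨mem_univ _, ?_⟩
        exact Or.inr ⟨hheavy, rfl⟩
      have := hREC _ hin
      rw [hsliceinl, hsliceinl] at this
      exact this

section Levels

lemma level_codes (F : Type) [Field F] (q d : ℕ) (hq : Nat.Prime q) (hq8 : 8 ≤ q) :
    ∀ j, j ≤ d → ∃ (ι κ : Type) (_ : Fintype ι) (_ : Fintype κ),
      GoodCode F ι κ (8^(d+1-j) * q^(j+1)) ∧
      Fintype.card ι = q^(2*j) ∧ Fintype.card κ = 8^(d+1) * q * (2 * q^2)^j := by
  haveI : NeZero q := ⟨hq.ne_zero⟩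
  intro j
  induction j with
  | zero =>
    intro _
    refine ⟨Fin 1, Fin (8^(d+1) * q) × Fin 1, inferInstance, inferInstance, ?_, by simp, by simp⟩
    have h0 := (goodCode_id F (Fin 1)).repl (8^(d+1) * q) (by positivity)
    have he : 8^(d+1) * q * 1 = 8^(d+1-0) * q^(0+1) := by simp
    rwa [he] at h0
  | succ j ih =>
    intro hjd
    obtain ⟨ι, κ, _, _, hcode, hcι, hcκ⟩ := ih (by omega)
    have hcond : 8 * q ≤ 8^(d+1-j) * q^(j+1) := by
      have h1 : (8:ℕ) ≤ 8^(d+1-j) := by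
        calc (8:ℕ) = 8^1 := (pow_one 8).symm
          _ ≤ 8^(d+1-j) := Nat.pow_le_pow_right (by norm_num) (by omega)
      have h2 : q ≤ q^(j+1) := Nat.le_self_pow (by omega) q
      exact Nat.mul_le_mul h1 h2
    have hg := hcode.gadget q hq hq8 hcond
    have e1 : d + 1 - j = (d - j) + 1 := by omega
    have e2 : d + 1 - (j+1) = d - j := by omega
    have hkeq : q * (8^(d+1-j) * q^(j+1)) / 8 = 8^(d-j) * q^(j+2) := by
      rw [e1, pow_succ]
      have hmm : q * (8^(d-j) * 8 * q^(j+1)) = 8 * (8^(d-j) * q^(j+2)) := by ring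
      rw [hmm, Nat.mul_div_cancel_left _ (by norm_num : (0:ℕ) < 8)]
    rw [hkeq] at hg
    refine ⟨(ZMod q × ZMod q) × ι, ((ZMod q × ZMod q) ⊕ (ZMod q × ZMod q)) × κ,
      inferInstance, inferInstance, ?_, ?_, ?_⟩
    · rw [e2]
      exact hg
    · rw [Fintype.card_prod, Fintype.card_prod, ZMod.card, hcι]
      have : 2*(j+1) = 2*j + 2 := by ring
      rw [this, pow_add]
      ring
    · rw [Fintype.card_prod, Fintype.card_sum, Fintype.card_prod, ZMod.card, hcκ, pow_succ]
      ring

theorem build_code (F : Type) [Field F] (q d M n : ℕ) (hq : Nat.Prime q) (hq8 : 8 ≤ q)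
    (hM : 0 < M) (hn : n ≤ q^(2*d)) :
    ExistsBatchCode F (M * (8^(d+1) * q * (2*q^2)^d)) n (M * (8 * q^(d+1))) := by
  classical
  obtain ⟨ι, κ, _, _, hcode, hcι, hcκ⟩ := level_codes F q d hq hq8 d le_rfl
  have hkd : 8^(d+1-d) * q^(d+1) = 8 * q^(d+1) := by
    have h1 : d + 1 - d = 1 := by omega
    rw [h1, pow_one]
  rw [hkd] at hcode
  have hemb : Nonempty (Fin n ↪ ι) :=
    Function.Embedding.nonempty_iff_card_le.mpr (by rw [Fintype.card_fin, hcι]; exact hn)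
  obtain ⟨f⟩ := hemb
  exact ((hcode.pad f).repl M hM).toExists F (Fintype.card_fin n)
    (by rw [Fintype.card_prod, Fintype.card_fin, hcκ])

end Levels

/-- For every `ε ≥ 0.5` and `τ > 0` there are constants `c₁, c₂ > 0` and
`n₀` such that for all `n ≥ n₀` there is a binary `k`-batch code `[N,n,k]` with
`k ≥ c₁·n^ε` and length `N ≤ c₂·n^(0.5+ε+τ)`. -/
theorem stmt10 (ε τ : ℝ) (hε : 0.5 ≤ ε) (hτ : 0 < τ) :
    ∃ c1 c2 : ℝ, 0 < c1 ∧ 0 < c2 ∧ ∃ n0 : ℕ, ∀ n : ℕ, n0 ≤ n →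
      ∃ N k : ℕ,
        c1 * (n : ℝ) ^ ε ≤ (k : ℝ) ∧
        (N : ℝ) ≤ c2 * (n : ℝ) ^ (0.5 + ε + τ) ∧
        ExistsBatchCode (ZMod 2) N n k := by
  classical
  haveI : Fact (Nat.Prime 2) := ⟨Nat.prime_two⟩
  set d : ℕ := max 1 ⌈(2*τ)⁻¹⌉₊ with hd
  have hd1 : 1 ≤ d := le_max_left _ _
  have hdR : (1:ℝ) ≤ (d:ℝ) := by exact_mod_cast hd1
  have hdpos : (0:ℝ) < (d:ℝ) := by linarith
  have hdτ : (1:ℝ)/(2*(d:ℝ)) ≤ τ := by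
    have h1 : ((2*τ)⁻¹ : ℝ) ≤ (⌈(2*τ)⁻¹⌉₊ : ℝ) := Nat.le_ceil _
    have h2 : ((⌈(2*τ)⁻¹⌉₊ : ℕ) : ℝ) ≤ (d:ℝ) := by
      exact_mod_cast le_max_right 1 ⌈(2*τ)⁻¹⌉₊
    have h3 : ((2*τ)⁻¹ : ℝ) ≤ (d:ℝ) := le_trans h1 h2
    rw [div_le_iff₀ (by positivity)]
    calc (1:ℝ) = (2*τ) * (2*τ)⁻¹ := (mul_inv_cancel₀ (by positivity)).symm
      _ ≤ (2*τ) * d := mul_le_mul_of_nonneg_left h3 (by positivity)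
      _ = τ * (2*d) := by ring
  refine ⟨1, 2 * 8^(d+1) * 2^d * 132^(2*d+1), one_pos, by positivity, 1, ?_⟩
  intro n hn1
  have hn1R : (1:ℝ) ≤ (n:ℝ) := by exact_mod_cast hn1
  have hnpos : (0:ℝ) < (n:ℝ) := by linarith
  -- the (2d)-th root of n
  set rt : ℝ := (n:ℝ) ^ ((1:ℝ)/(2*(d:ℝ))) with hrt
  have hrt1 : (1:ℝ) ≤ rt := by
    have := Real.rpow_le_rpow_of_exponent_le hn1R (by positivity : (0:ℝ) ≤ (1:ℝ)/(2*(d:ℝ)))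
    · rw [Real.rpow_zero] at this
      exact this
  have hrtpos : (0:ℝ) < rt := by linarith
  set M0 : ℕ := ⌈rt⌉₊ + 64 with hM0
  obtain ⟨q, hqprime, hqgt, hqle⟩ := Nat.exists_prime_lt_and_le_two_mul (n := M0) (by omega)
  have hq8 : 8 ≤ q := by omega
  have hq1R : (1:ℝ) ≤ (q:ℝ) := by exact_mod_cast Nat.one_le_iff_ne_zero.mpr hqprime.ne_zero
  have hrtq : rt ≤ (q:ℝ) := by
    calc rt ≤ (⌈rt⌉₊ : ℝ) := Nat.le_ceil _
      _ ≤ (M0 : ℝ) := by exact_mod_cast (by omega : ⌈rt⌉₊ ≤ M0)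
      _ ≤ (q:ℝ) := by exact_mod_cast hqgt.le
  have hexp1 : ((1:ℝ)/(2*(d:ℝ))) * ((2*d : ℕ) : ℝ) = 1 := by
    push_cast
    field_simp
  have hnqR : (n:ℝ) ≤ (q:ℝ)^(2*d : ℕ) := by
    have h1 : rt^(2*d:ℕ) ≤ (q:ℝ)^(2*d:ℕ) := pow_le_pow_left₀ (le_of_lt hrtpos) hrtq _
    have h2 : rt^(2*d:ℕ) = (n:ℝ) := by
      rw [hrt, ← Real.rpow_natCast ((n:ℝ) ^ ((1:ℝ)/(2*(d:ℝ)))) (2*d),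
        ← Real.rpow_mul (le_of_lt hnpos), hexp1, Real.rpow_one]
    rwa [h2] at h1
  have hnq : n ≤ q ^ (2*d) := by exact_mod_cast hnqR
  -- replication factor
  set M : ℕ := ⌈(n:ℝ) ^ (ε - 1/2)⌉₊ with hM
  have hMpos : 0 < M := Nat.ceil_pos.mpr (Real.rpow_pos_of_pos hnpos _)
  have hMle : (n:ℝ) ^ (ε - 1/2) ≤ (M:ℝ) := Nat.le_ceil _
  have hcode := build_code (ZMod 2) q d M n hqprime hq8 hMpos hnq
  refine ⟨M * (8^(d+1) * q * (2*q^2)^d), M * (8 * q^(d+1)), ?_, ?_, hcode⟩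
  · -- k lower bound
    have hqd : (n:ℝ)^((1:ℝ)/2) ≤ (q:ℝ)^(d:ℕ) := by
      have h2 := Real.rpow_le_rpow (le_of_lt hnpos) hnqR (by norm_num : (0:ℝ) ≤ 1/2)
      have h3 : ((q:ℝ)^(2*d:ℕ))^((1:ℝ)/2) = (q:ℝ)^(d:ℕ) := by
        rw [← Real.rpow_natCast (q:ℝ) (2*d), ← Real.rpow_mul (by positivity),
          ← Real.rpow_natCast (q:ℝ) d]
        congr 1
        push_cast
        ring
      rwa [h3] at h2
    have hq_pow : (q:ℝ)^(d:ℕ) ≤ 8 * (q:ℝ)^(d+1) := by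
      calc (q:ℝ)^(d:ℕ) ≤ (q:ℝ)^(d+1) := pow_le_pow_right₀ hq1R (by omega)
        _ ≤ 8 * (q:ℝ)^(d+1) := le_mul_of_one_le_left (by positivity) (by norm_num)
    calc 1 * (n:ℝ)^ε = (n:ℝ)^(ε - 1/2) * (n:ℝ)^((1:ℝ)/2) := by
          rw [one_mul, ← Real.rpow_add hnpos]
          norm_num
      _ ≤ (M:ℝ) * (q:ℝ)^(d:ℕ) :=
          mul_le_mul hMle hqd (by positivity) (le_trans (by positivity) hMle)
      _ ≤ (M:ℝ) * (8 * (q:ℝ)^(d+1)) := mul_le_mul_of_nonneg_left hq_pow (by positivity)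
      _ = ((M * (8 * q^(d+1)) : ℕ) : ℝ) := by push_cast; ring
  · -- N upper bound
    have hM2 : (M:ℝ) ≤ 2 * (n:ℝ)^(ε - 1/2) := by
      have h1 : (M:ℝ) ≤ (n:ℝ)^(ε - 1/2) + 1 := le_of_lt (Nat.ceil_lt_add_one (by positivity))
      have h2 : (1:ℝ) ≤ (n:ℝ)^(ε - 1/2) := by
        have := Real.rpow_le_rpow_of_exponent_le hn1R (by norm_num at hε ⊢; linarith : (0:ℝ) ≤ ε - 1/2)
        rwa [Real.rpow_zero] at this
      linarith
    have hq132 : (q:ℝ) ≤ 132 * rt := by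
      have h1 : (q:ℝ) ≤ 2 * (M0:ℝ) := by exact_mod_cast hqle
      have h2 : (M0:ℝ) ≤ rt + 65 := by
        have := Nat.ceil_lt_add_one (le_of_lt hrtpos)
        have hcast : (M0:ℝ) = (⌈rt⌉₊ : ℝ) + 64 := by exact_mod_cast rfl
        linarith
      calc (q:ℝ) ≤ 2 * (rt + 65) := by linarith
        _ ≤ 132 * rt := by linarith
    have hqpow : (q:ℝ)^(2*d+1) ≤ 132^(2*d+1) * (n:ℝ)^(1 + (1:ℝ)/(2*(d:ℝ))) := by
      have h1 : (q:ℝ)^(2*d+1) ≤ (132*rt)^(2*d+1) :=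
        pow_le_pow_left₀ (by positivity) hq132 _
      have h2 : (132*rt)^(2*d+1) = 132^(2*d+1) * rt^(2*d+1) := mul_pow _ _ _
      have h3 : rt^(2*d+1 : ℕ) = (n:ℝ)^(1 + (1:ℝ)/(2*(d:ℝ))) := by
        rw [hrt, ← Real.rpow_natCast ((n:ℝ) ^ ((1:ℝ)/(2*(d:ℝ)))) (2*d+1),
          ← Real.rpow_mul (le_of_lt hnpos)]
        congr 1
        push_cast
        field_simp
      rw [h2, h3] at h1
      exact h1
    have hNval : ((M * (8^(d+1) * q * (2*q^2)^d) : ℕ) : ℝ)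
        = (M:ℝ) * 8^(d+1) * 2^d * (q:ℝ)^(2*d+1) := by
      push_cast
      rw [mul_pow]
      ring_nf
    have hmain : (n:ℝ)^(1 + (1:ℝ)/(2*(d:ℝ))) ≤ (n:ℝ)^(1 + τ) :=
      Real.rpow_le_rpow_of_exponent_le hn1R (by linarith)
    calc ((M * (8^(d+1) * q * (2*q^2)^d) : ℕ) : ℝ)
        = (M:ℝ) * 8^(d+1) * 2^d * (q:ℝ)^(2*d+1) := hNval
      _ ≤ (2 * (n:ℝ)^(ε - 1/2)) * 8^(d+1) * 2^d * (132^(2*d+1) * (n:ℝ)^(1 + (1:ℝ)/(2*(d:ℝ)))) := by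
          have hb1 : (0:ℝ) ≤ 8^(d+1) * 2^d := by positivity
          have := mul_le_mul hM2 hqpow (by positivity) (by positivity)
          nlinarith [this, hb1]
      _ ≤ (2 * (n:ℝ)^(ε - 1/2)) * 8^(d+1) * 2^d * (132^(2*d+1) * (n:ℝ)^(1 + τ)) := by
          have h0 : (0:ℝ) ≤ (2 * (n:ℝ)^(ε - 1/2)) * 8^(d+1) * 2^d * 132^(2*d+1) := by positivity
          calc (2 * (n:ℝ)^(ε - 1/2)) * 8^(d+1) * 2^d * (132^(2*d+1) * (n:ℝ)^(1 + (1:ℝ)/(2*(d:ℝ))))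
              = ((2 * (n:ℝ)^(ε - 1/2)) * 8^(d+1) * 2^d * 132^(2*d+1)) * (n:ℝ)^(1 + (1:ℝ)/(2*(d:ℝ))) := by ring
            _ ≤ ((2 * (n:ℝ)^(ε - 1/2)) * 8^(d+1) * 2^d * 132^(2*d+1)) * (n:ℝ)^(1 + τ) :=
                mul_le_mul_of_nonneg_left hmain h0
            _ = (2 * (n:ℝ)^(ε - 1/2)) * 8^(d+1) * 2^d * (132^(2*d+1) * (n:ℝ)^(1 + τ)) := by ring
      _ = (2 * 8^(d+1) * 2^d * 132^(2*d+1)) * ((n:ℝ)^(ε - 1/2) * (n:ℝ)^(1 + τ)) := by ring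
      _ = (2 * 8^(d+1) * 2^d * 132^(2*d+1)) * (n:ℝ)^(0.5 + ε + τ) := by
          rw [← Real.rpow_add hnpos]
          norm_num
          congr 1
          ring
end

section
/- Let p be a prime, n = p², and k an integer with 1 ≤ k ≤ p. Then the array code C(r = p, p, S = {0,1,…,k−1}) is a binary k-PIR code [p² + kp, p², k]^P; in particular its redundancy is kp = k·√n, so r_P(n,k) ≤ k·√n for n = p² and k ≤ √n. -/
/-- The diagonal `D_{s,t} = { (i, (t + i·s) mod p) : i ∈ [r] } ⊆ [r] × [p]`. -/
def diag (r p s t : ℕ) : Finset (ℕ × ℕ) :=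
  (Finset.range r).image fun i => (i, (t + i * s) % p)

/-- The encoder of the array code `C(r, p, S)` with slope set `S = {S 0, …, S (k-1)}`: the
`r × p` information array `x` is kept systematically, and for each slope index `ℓ ∈ [k]` and
each `t ∈ [p]` a parity bit `ρ_{ℓ,t} = ∑_{(i,j) ∈ D_{S ℓ, t}} x_{i,j}` is appended. -/
def arrayEncode (r p k : ℕ) (S : Fin k → ℕ) (x : Fin r × Fin p → ZMod 2) :
    (Fin r × Fin p) ⊕ (Fin k × Fin p) → ZMod 2 :=
  fun c =>
    match c with
    | Sum.inl ij => x ij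
    | Sum.inr (l, t) =>
        ∑ ij ∈ Finset.univ.filter
            (fun ij : Fin r × Fin p => ((ij.1 : ℕ), (ij.2 : ℕ)) ∈ diag r p (S l) (t : ℕ)),
          x ij

lemma diag_mem (p s t : ℕ) (hp : 0 < p) (u v : Fin p) :
    (((u : ℕ), (v : ℕ)) ∈ diag p p s t) ↔ (v : ℕ) = (t + (u : ℕ) * s) % p := by
  simp only [diag, Finset.mem_image, Finset.mem_range, Prod.mk.injEq]
  constructor
  · rintro ⟨i', _, h1, h2⟩; subst h1; exact h2.symm
  · intro h; exact ⟨u, u.isLt, rfl, h.symm⟩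

/-- For `p` prime and `1 ≤ k ≤ p`, the array code
`C(r = p, p, S = {0,1,…,k-1})` — a binary systematic code of dimension `n = p²` and
redundancy `kp = k·√n` — is a `k`-PIR code: every information coordinate has `k` pairwise
disjoint recovering sets.  In particular `r_P(p², k) ≤ k·p`. -/
theorem stmt13 (p k : ℕ) (hp : p.Prime) (hk1 : 1 ≤ k) (hkp : k ≤ p) :
    ∀ ij : Fin p × Fin p,
      ∃ R : Fin k → Finset ((Fin p × Fin p) ⊕ (Fin k × Fin p)),
        (∀ a b, a ≠ b → Disjoint (R a) (R b)) ∧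
        ∀ a, ∀ x x' : Fin p × Fin p → ZMod 2,
          (∀ c ∈ R a, arrayEncode p p k (fun l => (l : ℕ)) x c
                    = arrayEncode p p k (fun l => (l : ℕ)) x' c) →
          x ij = x' ij := by
  haveI : Fact p.Prime := ⟨hp⟩
  rintro ⟨i, j⟩
  have hppos : 0 < p := hp.pos
  set tn : Fin k → ℕ := fun a => ((j : ℕ) + (i : ℕ) * (a : ℕ) * (p - 1)) % p with htn
  have htlt : ∀ a, tn a < p := fun a => Nat.mod_lt _ hppos
  have hkey : ∀ a : Fin k, (tn a + (i : ℕ) * (a : ℕ)) % p = (j : ℕ) := by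
    intro a
    have h0 : (tn a + (i : ℕ) * a) % p = ((j : ℕ) + i * a * (p - 1) + i * a) % p := by
      rw [htn]; simp [Nat.mod_add_mod]
    have h1 : (j : ℕ) + (i : ℕ) * a * (p - 1) + i * a = j + i * a * p := by
      have hp1 : (p - 1) + 1 = p := Nat.succ_pred_eq_of_pos hppos
      calc (j : ℕ) + (i : ℕ) * a * (p - 1) + i * a
          = (j : ℕ) + (i : ℕ) * a * ((p - 1) + 1) := by ring
        _ = j + i * a * p := by rw [hp1]
    rw [h0, h1, Nat.add_mul_mod_self_right, Nat.mod_eq_of_lt j.isLt]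
  -- membership of (i,j) in the diagonal for slope a
  have hij_mem : ∀ a : Fin k, (((i : ℕ), (j : ℕ)) ∈ diag p p (a : ℕ) (tn a)) := by
    intro a
    rw [diag_mem p _ _ hppos]
    exact (hkey a).symm
  -- the recovering sets
  set D : Fin k → Finset (Fin p × Fin p) := fun a =>
    Finset.univ.filter (fun uv : Fin p × Fin p =>
      ((uv.1 : ℕ), (uv.2 : ℕ)) ∈ diag p p (a : ℕ) (tn a)) with hD
  refine ⟨fun a => insert (Sum.inr (a, ⟨tn a, htlt a⟩))
      (((D a).erase (i, j)).image Sum.inl), ?_, ?_⟩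
  · -- disjointness
    intro a b hab
    rw [Finset.disjoint_left]
    intro c hca hcb
    simp only [Finset.mem_insert, Finset.mem_image, Finset.mem_erase, hD,
      Finset.mem_filter, Finset.mem_univ, true_and] at hca hcb
    rcases hca with hca | ⟨uv, ⟨huvne, huva⟩, rfl⟩
    · rcases hcb with hcb | ⟨uv, _, huv⟩
      · rw [hca] at hcb
        exact hab (by injection (Sum.inr.inj hcb.symm) with h _ ; exact h ▸ rfl)
      · exact (Sum.inl_ne_inr (huv.trans hca)).elim
    · rcases hcb with hcb | ⟨uv', ⟨huvne', huvb⟩, huv'⟩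
      · exact (Sum.inl_ne_inr hcb).elim
      · have huveq : uv' = uv := Sum.inl.inj huv'
        subst huveq
        -- uv lies on both diagonals; derive uv = (i,j), contradiction
        obtain ⟨u, v⟩ := uv'
        rw [diag_mem p _ _ hppos] at huva huvb
        -- pass to ZMod p
        have hcast : ∀ (s t : ℕ), (v : ℕ) = (t + (u : ℕ) * s) % p →
            ((v : ℕ) : ZMod p) = (t : ZMod p) + (u : ℕ) * s := by
          intro s t h
          have := congrArg (Nat.cast : ℕ → ZMod p) h
          rwa [ZMod.natCast_mod, Nat.cast_add, Nat.cast_mul] at this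
        have ha := hcast _ _ huva
        have hb := hcast _ _ huvb
        have hja : ((j : ℕ) : ZMod p) = (tn a : ZMod p) + (i : ℕ) * (a : ℕ) := by
          have := congrArg (Nat.cast : ℕ → ZMod p) (hkey a)
          rw [ZMod.natCast_mod, Nat.cast_add, Nat.cast_mul] at this
          exact this.symm
        have hjb : ((j : ℕ) : ZMod p) = (tn b : ZMod p) + (i : ℕ) * (b : ℕ) := by
          have := congrArg (Nat.cast : ℕ → ZMod p) (hkey b)
          rw [ZMod.natCast_mod, Nat.cast_add, Nat.cast_mul] at this
          exact this.symm
        have h1 : ((v : ℕ) : ZMod p) - ((j : ℕ) : ZMod p)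
            = (((u : ℕ) : ZMod p) - ((i : ℕ) : ZMod p)) * ((a : ℕ) : ZMod p) := by
          rw [ha, hja]; push_cast; ring
        have h2 : ((v : ℕ) : ZMod p) - ((j : ℕ) : ZMod p)
            = (((u : ℕ) : ZMod p) - ((i : ℕ) : ZMod p)) * ((b : ℕ) : ZMod p) := by
          rw [hb, hjb]; push_cast; ring
        have hmul : (((u : ℕ) : ZMod p) - ((i : ℕ) : ZMod p))
            * (((a : ℕ) : ZMod p) - ((b : ℕ) : ZMod p)) = 0 := by
          rw [mul_sub, ← h1, ← h2, sub_self]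
        have habne : ((a : ℕ) : ZMod p) - ((b : ℕ) : ZMod p) ≠ 0 := by
          intro h
          apply hab
          have : ((a : ℕ) : ZMod p) = ((b : ℕ) : ZMod p) := by
            have := sub_eq_zero.mp h; exact this
          have ha' := ZMod.val_cast_of_lt (lt_of_lt_of_le a.isLt hkp)
          have hb' := ZMod.val_cast_of_lt (lt_of_lt_of_le b.isLt hkp)
          have : (a : ℕ) = (b : ℕ) := by
            rw [← ha', ← hb', this]
          exact Fin.ext this
        have hui : ((u : ℕ) : ZMod p) - ((i : ℕ) : ZMod p) = 0 :=
          (mul_eq_zero.mp hmul).resolve_right habne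
        have hu : (u : ℕ) = (i : ℕ) := by
          have := sub_eq_zero.mp hui
          rw [← ZMod.val_cast_of_lt u.isLt, ← ZMod.val_cast_of_lt i.isLt, this]
        have hv : (v : ℕ) = (j : ℕ) := by
          have h3 : ((v : ℕ) : ZMod p) = ((j : ℕ) : ZMod p) := by
            have := h1
            rw [hu] at this
            simpa using sub_eq_zero.mp (by rw [this]; ring)
          rw [← ZMod.val_cast_of_lt v.isLt, ← ZMod.val_cast_of_lt j.isLt, h3]
        exact huvne (Prod.ext (Fin.ext hu) (Fin.ext hv))
  · -- recovery
    intro a x x' hagree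
    have hpar := hagree (Sum.inr (a, ⟨tn a, htlt a⟩)) (Finset.mem_insert_self _ _)
    simp only [arrayEncode] at hpar
    have hset : (Finset.univ.filter
        (fun uv : Fin p × Fin p => ((uv.1 : ℕ), (uv.2 : ℕ)) ∈ diag p p (a : ℕ) (tn a))) = D a := rfl
    have hij : ((i, j) : Fin p × Fin p) ∈ D a := by
      rw [hD]; simp only [Finset.mem_filter, Finset.mem_univ, true_and]; exact hij_mem a
    have htails : ∀ uv ∈ (D a).erase (i, j), x uv = x' uv := by
      intro uv huv
      have := hagree (Sum.inl uv)
        (Finset.mem_insert_of_mem (Finset.mem_image_of_mem _ huv))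
      simpa [arrayEncode] using this
    have hsplit : ∀ y : Fin p × Fin p → ZMod 2,
        ∑ uv ∈ D a, y uv = y (i, j) + ∑ uv ∈ (D a).erase (i, j), y uv := by
      intro y
      exact (Finset.add_sum_erase _ y hij).symm
    rw [hsplit x, hsplit x', Finset.sum_congr rfl htails] at hpar
    exact add_right_cancel hpar
end

section
/- Let C be a binary systematic [N,n] code and r, k positive integers. Suppose that for every information coordinate i ∈ {1,…,n} there is a fixed collection of k pairwise disjoint recovering sets R_{i,1},…,R_{i,k} ⊆ {1,…,N} for i, each of size at most r, and suppose that for every pair of distinct indices i, j ∈ {1,…,n} and every a ∈ {1,…,k}, the set R_{i,a} intersects at most one of the sets R_{j,1},…,R_{j,k}. Then C is an (r,k)-batch code. -/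
/-- Let `C` be a binary systematic `[N,n]` code with, for every information
coordinate `i`, a fixed family of `k` pairwise disjoint recovering sets of size at most `r`,
such that each recovering set of coordinate `i` intersects at most one recovering set of any
other coordinate `j`.  Then `C` is an `(r,k)`-batch code: every multiset request of `k`
information coordinates can be answered by pairwise disjoint recovering sets of size at
most `r`. -/
theorem stmt14 {N n r k : ℕ} (hr : 0 < r) (hk : 0 < k) (hn : n ≤ N)
    (E : (Fin n → ZMod 2) →ₗ[ZMod 2] (Fin N → ZMod 2))
    (hinj : Function.Injective E)
    (hsys : ∀ (x : Fin n → ZMod 2) (i : Fin n), E x (Fin.castLE hn i) = x i)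
    (R : Fin n → Fin k → Finset (Fin N))
    (hrec : ∀ i a, ∀ x x' : Fin n → ZMod 2, (∀ c ∈ R i a, E x c = E x' c) → x i = x' i)
    (hsize : ∀ i a, (R i a).card ≤ r)
    (hdisj : ∀ i, ∀ a b, a ≠ b → Disjoint (R i a) (R i b))
    (hcross : ∀ i j, i ≠ j → ∀ a b1 b2,
      ¬Disjoint (R i a) (R j b1) → ¬Disjoint (R i a) (R j b2) → b1 = b2) :
    ∀ req : Fin k → Fin n,
      ∃ T : Fin k → Finset (Fin N),
        (∀ a b, a ≠ b → Disjoint (T a) (T b)) ∧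
        ∀ a, (T a).card ≤ r ∧
          ∀ x x' : Fin n → ZMod 2, (∀ c ∈ T a, E x c = E x' c) → x (req a) = x' (req a) := by
  classical
  intro req
  -- every recovering set is nonempty
  have hne : ∀ i b, (R i b).Nonempty := by
    intro i b
    by_contra h
    rw [Finset.not_nonempty_iff_eq_empty] at h
    have h0 := hrec i b 0 (Pi.single i 1) (by simp [h])
    simp [Pi.single_eq_same] at h0
  -- a single chosen set blocks at most one index of another family
  have block : ∀ (i : Fin n) (j : Fin n) (c b1 b2 : Fin k),
      ¬Disjoint (R i b1) (R j c) → ¬Disjoint (R i b2) (R j c) → b1 = b2 := by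
    intro i j c b1 b2 h1 h2
    by_cases hij : j = i
    · subst hij
      have e1 : b1 = c := by
        by_contra hne'
        exact h1 (hdisj j b1 c hne')
      have e2 : b2 = c := by
        by_contra hne'
        exact h2 (hdisj j b2 c hne')
      rw [e1, e2]
    · exact hcross j i hij c b1 b2
        (fun hd => h1 hd.symm) (fun hd => h2 hd.symm)
  -- greedy construction
  have key : ∀ m : ℕ, m ≤ k → ∃ σ : Fin k → Fin k,
      ∀ a a' : Fin k, a.val < m → a'.val < m → a ≠ a' →
        Disjoint (R (req a) (σ a)) (R (req a') (σ a')) := by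
    intro m hm
    induction m with
    | zero => exact ⟨id, fun a a' h => absurd h (Nat.not_lt_zero _)⟩
    | succ m ih =>
      obtain ⟨σ, hσ⟩ := ih (Nat.le_of_succ_le hm)
      have hmk : m < k := hm
      set am : Fin k := ⟨m, hmk⟩ with ham
      set A : Finset (Fin k) := Finset.univ.filter (fun a' => a'.val < m) with hA
      have hAcard : A.card ≤ m := by
        have : ∀ a' ∈ A, a'.val ∈ Finset.range m := by
          intro a' h'
          simp only [hA, Finset.mem_filter] at h'
          simpa using h'.2
        calc A.card ≤ (Finset.range m).card :=
              Finset.card_le_card_of_injOn (fun a' => a'.val) this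
                (fun x _ y _ h => Fin.val_injective h)
          _ = m := Finset.card_range m
      set B : Finset (Fin k) := Finset.univ.filter
        (fun b => ∃ a' ∈ A, ¬Disjoint (R (req am) b) (R (req a') (σ a'))) with hB
      -- map each a' to its unique blocked index
      have : ∃ g : Fin k → Fin k, ∀ a' b,
          ¬Disjoint (R (req am) b) (R (req a') (σ a')) → g a' = b := by
        refine ⟨fun a' => if h : ∃ b, ¬Disjoint (R (req am) b) (R (req a') (σ a'))
          then h.choose else ⟨0, hk⟩, ?_⟩
        intro a' b hb
        have hex : ∃ b, ¬Disjoint (R (req am) b) (R (req a') (σ a')) := ⟨b, hb⟩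
        simp only [dif_pos hex]
        exact block (req am) (req a') (σ a') hex.choose b hex.choose_spec hb
      obtain ⟨g, hg⟩ := this
      have hBsub : B ⊆ A.image g := by
        intro b hb
        simp only [hB, Finset.mem_filter] at hb
        obtain ⟨a', ha', hblk⟩ := hb.2
        exact Finset.mem_image.mpr ⟨a', ha', hg a' b hblk⟩
      have hBcard : B.card < k :=
        lt_of_le_of_lt (le_trans (Finset.card_le_card hBsub)
          (le_trans Finset.card_image_le hAcard)) hmk
      have : ∃ b : Fin k, b ∉ B := by
        by_contra hall
        push_neg at hall
        have : (Finset.univ : Finset (Fin k)) ⊆ B := fun b _ => hall b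
        have := Finset.card_le_card this
        simp at this
        omega
      obtain ⟨b, hbB⟩ := this
      have hbgood : ∀ a' ∈ A, Disjoint (R (req am) b) (R (req a') (σ a')) := by
        intro a' ha'
        by_contra hd
        exact hbB (by simp only [hB, Finset.mem_filter]; exact ⟨Finset.mem_univ b, a', ha', hd⟩)
      refine ⟨Function.update σ am b, ?_⟩
      intro a a' ha ha' hne'
      have memA : ∀ c : Fin k, c.val < m → c ∈ A := by
        intro c hc; simp [hA, hc]
      by_cases h1 : a = am
      · subst h1
        have h2 : a'.val < m := by
          rcases Nat.lt_succ_iff_lt_or_eq.mp ha' with h | h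
          · exact h
          · exact absurd (Fin.ext h : a' = am) (Ne.symm hne')
        have hne2 : a' ≠ am := Ne.symm hne'
        rw [Function.update_self, Function.update_of_ne hne2]
        exact hbgood a' (memA a' h2)
      · have h1' : a.val < m := by
          rcases Nat.lt_succ_iff_lt_or_eq.mp ha with h | h
          · exact h
          · exact absurd (Fin.ext h) h1
        by_cases h2 : a' = am
        · subst h2
          rw [Function.update_self, Function.update_of_ne h1]
          exact (hbgood a (memA a h1')).symm
        · have h2' : a'.val < m := by
            rcases Nat.lt_succ_iff_lt_or_eq.mp ha' with h | h
            · exact h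
            · exact absurd (Fin.ext h) h2
          rw [Function.update_of_ne h1, Function.update_of_ne h2]
          exact hσ a a' h1' h2' hne'
  obtain ⟨σ, hσ⟩ := key k le_rfl
  refine ⟨fun a => R (req a) (σ a), ?_, ?_⟩
  · intro a b hab
    exact hσ a b a.isLt b.isLt hab
  · intro a
    exact ⟨hsize (req a) (σ a), fun x x' h => hrec (req a) (σ a) x x' h⟩
end

section
/- Let p be a prime, r a positive integer with r ≤ p, and S ⊆ [p] a set of size k. If S contains no r-weighted arithmetic progression modulo p, then the array code C(r,p,S) is a binary (r,k)-batch code of dimension rp (and length rp + kp): for every multiset {i_1,…,i_k} of information coordinates there exist pairwise disjoint recovering sets R_1,…,R_k, each of size at most r, with R_j a recovering set for i_j. -/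
def NoWeightedAP (r p : ℕ) (S : Set ℕ) : Prop :=
  ¬ ∃ s1 ∈ S, ∃ s2 ∈ S, ∃ s3 ∈ S, ∃ x y : ℕ,
      s1 ≠ s2 ∧ s1 ≠ s3 ∧ s2 ≠ s3 ∧ 0 < x ∧ 0 < y ∧ x + y ≤ r - 1 ∧
      (x * s1 + y * s2) % p = ((x + y) * s3) % p

section Stmt15Aux

attribute [local instance] Classical.propDecidable

variable {r p k : ℕ}

/-- The intercept (column at row 0, mod p) of the line of slope `S ℓ` through cell `w`. -/
def icpt (S : Fin k → ℕ) (ℓ : Fin k) (w : Fin r × Fin p) : ZMod p :=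
  ((w.2 : ℕ) : ZMod p) - ((w.1 : ℕ) : ZMod p) * (S ℓ : ZMod p)

lemma rowcast_inj [NeZero p] (hrp : r ≤ p) {i j : Fin r}
    (h : ((i : ℕ) : ZMod p) = ((j : ℕ) : ZMod p)) : i = j := by
  have hv := congrArg ZMod.val h
  rw [ZMod.val_cast_of_lt (lt_of_lt_of_le i.2 hrp),
    ZMod.val_cast_of_lt (lt_of_lt_of_le j.2 hrp)] at hv
  exact Fin.ext hv

lemma colcast_inj [NeZero p] {i j : Fin p}
    (h : ((i : ℕ) : ZMod p) = ((j : ℕ) : ZMod p)) : i = j := by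
  have hv := congrArg ZMod.val h
  rw [ZMod.val_cast_of_lt i.2, ZMod.val_cast_of_lt j.2] at hv
  exact Fin.ext hv

lemma slopecast_inj {S : Fin k → ℕ} (hSinj : Function.Injective S) (hSlt : ∀ l, S l < p)
    [NeZero p] {ℓ ℓ' : Fin k}
    (h : ((S ℓ : ℕ) : ZMod p) = ((S ℓ' : ℕ) : ZMod p)) : ℓ = ℓ' := by
  have hv := congrArg ZMod.val h
  rw [ZMod.val_cast_of_lt (hSlt ℓ), ZMod.val_cast_of_lt (hSlt ℓ')] at hv
  exact hSinj hv

lemma cell_eq_of_row [NeZero p] (S : Fin k → ℕ) (ℓ : Fin k) {w w' : Fin r × Fin p}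
    (h : icpt S ℓ w = icpt S ℓ w') (hrow : w.1 = w'.1) : w = w' := by
  unfold icpt at h
  rw [hrow] at h
  have h2 : ((w.2 : ℕ) : ZMod p) = ((w'.2 : ℕ) : ZMod p) := by
    linear_combination h
  exact Prod.ext hrow (colcast_inj h2)

lemma rows_ne [NeZero p] (hrp : r ≤ p) (S : Fin k → ℕ) (ℓ : Fin k) {w w' : Fin r × Fin p}
    (hne : w ≠ w') (h : icpt S ℓ w = icpt S ℓ w') : (w.1 : ℕ) ≠ (w'.1 : ℕ) := by
  intro hrow
  exact hne (cell_eq_of_row S ℓ h (Fin.ext hrow))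

lemma line_inter (hp : p.Prime) (hrp : r ≤ p) (S : Fin k → ℕ) {ℓ ℓ' : Fin k}
    (hS : ((S ℓ : ℕ) : ZMod p) ≠ ((S ℓ' : ℕ) : ZMod p)) {w w' : Fin r × Fin p}
    (h1 : icpt S ℓ w = icpt S ℓ w') (h2 : icpt S ℓ' w = icpt S ℓ' w') : w = w' := by
  haveI : Fact p.Prime := ⟨hp⟩
  haveI : NeZero p := ⟨hp.ne_zero⟩
  unfold icpt at h1 h2
  have key : (((w.1 : ℕ) : ZMod p) - ((w'.1 : ℕ) : ZMod p)) *
      ((S ℓ : ZMod p) - (S ℓ' : ZMod p)) = 0 := by linear_combination h2 - h1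
  rcases mul_eq_zero.1 key with h | h
  · have hrow : ((w.1 : ℕ) : ZMod p) = ((w'.1 : ℕ) : ZMod p) := by linear_combination h
    exact cell_eq_of_row S ℓ h1 (rowcast_inj hrp hrow)
  · exact absurd (by linear_combination h) hS

lemma slope_unique (hp : p.Prime) (hrp : r ≤ p) {S : Fin k → ℕ}
    (hSinj : Function.Injective S) (hSlt : ∀ l, S l < p) {ℓ ℓ' : Fin k}
    {w w' : Fin r × Fin p} (hne : w ≠ w')
    (h1 : icpt S ℓ w = icpt S ℓ w') (h2 : icpt S ℓ' w = icpt S ℓ' w') : ℓ = ℓ' := by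
  haveI : NeZero p := ⟨hp.ne_zero⟩
  by_contra hll
  refine hll (slopecast_inj hSinj hSlt ?_)
  by_contra hS
  exact hne (line_inter hp hrp S hS h1 h2)



lemma AP3 (hp : p.Prime) (hrp : r ≤ p) {S : Fin k → ℕ}
    (hSinj : Function.Injective S) (hAP : NoWeightedAP r p (Set.range S))
    {A B C : Fin r × Fin p} {ℓAB ℓBC ℓAC : Fin k}
    (h1 : (A.1 : ℕ) < (B.1 : ℕ)) (h2 : (B.1 : ℕ) < (C.1 : ℕ))
    (hAB : icpt S ℓAB A = icpt S ℓAB B) (hBC : icpt S ℓBC B = icpt S ℓBC C)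
    (hAC : icpt S ℓAC A = icpt S ℓAC C)
    (d1 : ℓAB ≠ ℓBC) (d2 : ℓAB ≠ ℓAC) (d3 : ℓBC ≠ ℓAC) : False := by
  haveI : NeZero p := ⟨hp.ne_zero⟩
  set x := (B.1 : ℕ) - (A.1 : ℕ) with hx
  set y := (C.1 : ℕ) - (B.1 : ℕ) with hy
  have hxpos : 0 < x := by omega
  have hypos : 0 < y := by omega
  have hxy : x + y ≤ r - 1 := by
    have := C.1.2
    omega
  have cx : ((x : ℕ) : ZMod p) = ((B.1 : ℕ) : ZMod p) - ((A.1 : ℕ) : ZMod p) := by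
    rw [hx, Nat.cast_sub h1.le]
  have cy : ((y : ℕ) : ZMod p) = ((C.1 : ℕ) : ZMod p) - ((B.1 : ℕ) : ZMod p) := by
    rw [hy, Nat.cast_sub h2.le]
  have key : ((x * S ℓAB + y * S ℓBC : ℕ) : ZMod p) = (((x + y) * S ℓAC : ℕ) : ZMod p) := by
    push_cast
    unfold icpt at hAB hBC hAC
    linear_combination (S ℓAB : ZMod p) * cx + (S ℓBC : ZMod p) * cy -
      (S ℓAC : ZMod p) * cx - (S ℓAC : ZMod p) * cy + hAB + hBC - hAC
  have hmod : (x * S ℓAB + y * S ℓBC) % p = ((x + y) * S ℓAC) % p :=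
    (ZMod.natCast_eq_natCast_iff _ _ _).1 key
  exact hAP ⟨S ℓAB, ⟨ℓAB, rfl⟩, S ℓBC, ⟨ℓBC, rfl⟩, S ℓAC, ⟨ℓAC, rfl⟩, x, y,
    fun h => d1 (hSinj h), fun h => d2 (hSinj h), fun h => d3 (hSinj h),
    hxpos, hypos, hxy, hmod⟩

/-- Key geometric lemma: a cell `v` off an `S`-line `L` is `S`-collinear with at most one
cell of `L`. Stated as: two collinear relations through distinct slopes give a contradiction. -/
lemma LemX (hp : p.Prime) (hrp : r ≤ p) {S : Fin k → ℕ}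
    (hSinj : Function.Injective S) (hAP : NoWeightedAP r p (Set.range S))
    {v w w' : Fin r × Fin p} {ℓ1 ℓ2 ℓL : Fin k}
    (hL : icpt S ℓL w = icpt S ℓL w')
    (h1 : icpt S ℓ1 v = icpt S ℓ1 w) (h2 : icpt S ℓ2 v = icpt S ℓ2 w')
    (hvL : icpt S ℓL v ≠ icpt S ℓL w)
    (hww : w ≠ w') (h12 : ℓ1 ≠ ℓ2) : False := by
  haveI : NeZero p := ⟨hp.ne_zero⟩
  have hvw : v ≠ w := fun h => hvL (by rw [h])
  have hvw' : v ≠ w' := fun h => hvL (by rw [h, hL])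
  have d1L : ℓ1 ≠ ℓL := fun h => hvL (by rw [← h]; exact h1)
  have d2L : ℓ2 ≠ ℓL := fun h => hvL (by rw [← h]; exact h2.trans (by rw [h, ← hL])); 
  have r1 : (v.1 : ℕ) ≠ (w.1 : ℕ) := rows_ne hrp S ℓ1 hvw h1
  have r2 : (v.1 : ℕ) ≠ (w'.1 : ℕ) := rows_ne hrp S ℓ2 hvw' h2
  have rL : (w.1 : ℕ) ≠ (w'.1 : ℕ) := rows_ne hrp S ℓL hww hL
  rcases lt_trichotomy (v.1 : ℕ) (w.1 : ℕ) with hvwlt | h | hvwlt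
  · rcases lt_trichotomy (w.1 : ℕ) (w'.1 : ℕ) with hwlt | h | hwlt
    · -- v < w < w'
      exact AP3 hp hrp hSinj hAP hvwlt hwlt h1 hL h2 d1L h12 d2L.symm
    · exact absurd h rL
    · rcases lt_trichotomy (v.1 : ℕ) (w'.1 : ℕ) with hvw'lt | h | hvw'lt
      · -- v < w' < w
        exact AP3 hp hrp hSinj hAP hvw'lt hwlt h2 hL.symm h1 d2L h12.symm d1L.symm
      · exact absurd h r2
      · -- w' < v < w
        exact AP3 hp hrp hSinj hAP hvw'lt hvwlt h2.symm h1 hL.symm h12.symm d2L d1L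
  · exact absurd h r1
  · rcases lt_trichotomy (w'.1 : ℕ) (v.1 : ℕ) with hw'lt | h | hw'lt
    · rcases lt_trichotomy (w.1 : ℕ) (w'.1 : ℕ) with hwlt | h | hwlt
      · -- w < w' < v
        exact AP3 hp hrp hSinj hAP hwlt hw'lt hL h2.symm h1.symm d2L.symm d1L.symm h12.symm
      · exact absurd h rL
      · -- w' < w < v
        exact AP3 hp hrp hSinj hAP hwlt hvwlt hL.symm h1.symm h2.symm d1L.symm d2L.symm h12
    · exact absurd h.symm r2
    · -- w < v < w'
      exact AP3 hp hrp hSinj hAP hvwlt hw'lt h1.symm h2 hL h12 d1L d2L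
lemma mem_diag_iff {s t : ℕ} (ht : t < p) [NeZero p] (w : Fin r × Fin p) :
    (((w.1 : ℕ), (w.2 : ℕ)) ∈ diag r p s t) ↔ ((t + (w.1 : ℕ) * s : ℕ) : ZMod p) = ((w.2 : ℕ) : ZMod p) := by
  constructor
  · intro h
    simp only [diag, Finset.mem_image, Finset.mem_range] at h
    obtain ⟨i, hi, hpair⟩ := h
    have h1 : i = (w.1 : ℕ) := congrArg Prod.fst hpair
    have h2 : (t + i * s) % p = (w.2 : ℕ) := congrArg Prod.snd hpair
    subst h1
    rw [← h2]
    push_cast [ZMod.natCast_mod]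
    ring
  · intro h
    simp only [diag, Finset.mem_image, Finset.mem_range]
    refine ⟨(w.1 : ℕ), w.1.2, ?_⟩
    have : (t + (w.1 : ℕ) * s) % p = (w.2 : ℕ) := by
      have := congrArg ZMod.val h
      rwa [ZMod.val_natCast, ZMod.val_cast_of_lt w.2.2] at this
    rw [this]

lemma filter_diag_eq (S : Fin k → ℕ) (hSlt : ∀ l, S l < p) [NeZero p]
    (ℓ : Fin k) (v : Fin r × Fin p) :
    Finset.univ.filter
      (fun ij : Fin r × Fin p => ((ij.1 : ℕ), (ij.2 : ℕ)) ∈ diag r p (S ℓ) ((icpt S ℓ v).val))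
      = Finset.univ.filter (fun w => icpt S ℓ w = icpt S ℓ v) := by
  ext w
  simp only [Finset.mem_filter, Finset.mem_univ, true_and]
  rw [mem_diag_iff (ZMod.val_lt _) w]
  have hc : (((icpt S ℓ v).val : ℕ) : ZMod p) = icpt S ℓ v := ZMod.natCast_rightInverse _
  constructor
  · intro h
    push_cast at h
    rw [hc] at h
    unfold icpt at h ⊢
    linear_combination -h
  · intro h
    push_cast
    rw [hc]
    unfold icpt at h ⊢
    linear_combination -h

/-- The diagonal recovering set for cell `v` via slope index `ℓ`. -/
def Rset (S : Fin k → ℕ) [NeZero p] (v : Fin r × Fin p) (ℓ : Fin k) :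
    Finset ((Fin r × Fin p) ⊕ (Fin k × Fin p)) :=
  insert (Sum.inr (ℓ, ⟨(icpt S ℓ v).val, ZMod.val_lt _⟩))
    ((Finset.univ.filter (fun w => icpt S ℓ w = icpt S ℓ v ∧ w ≠ v)).image Sum.inl)

lemma mem_Rset (S : Fin k → ℕ) [NeZero p] (v : Fin r × Fin p) (ℓ : Fin k)
    (c : (Fin r × Fin p) ⊕ (Fin k × Fin p)) :
    c ∈ Rset S v ℓ ↔ (c = Sum.inr (ℓ, ⟨(icpt S ℓ v).val, ZMod.val_lt _⟩) ∨
      ∃ w : Fin r × Fin p, c = Sum.inl w ∧ icpt S ℓ w = icpt S ℓ v ∧ w ≠ v) := by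
  simp only [Rset, Finset.mem_insert, Finset.mem_image, Finset.mem_filter, Finset.mem_univ,
    true_and]
  constructor
  · rintro (h | ⟨w, hw, rfl⟩)
    · exact Or.inl h
    · exact Or.inr ⟨w, rfl, hw⟩
  · rintro (h | ⟨w, rfl, hw⟩)
    · exact Or.inl h
    · exact Or.inr ⟨w, hw, rfl⟩

lemma Rset_card (S : Fin k → ℕ) (hrp : r ≤ p) [NeZero p] (hr : 0 < r)
    (v : Fin r × Fin p) (ℓ : Fin k) : (Rset S v ℓ).card ≤ r := by
  have h1 : (Finset.univ.filter (fun w : Fin r × Fin p => icpt S ℓ w = icpt S ℓ v ∧ w ≠ v)).card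
      ≤ r - 1 := by
    have hsub : Finset.univ.filter (fun w : Fin r × Fin p => icpt S ℓ w = icpt S ℓ v ∧ w ≠ v)
        = (Finset.univ.filter (fun w : Fin r × Fin p => icpt S ℓ w = icpt S ℓ v)).erase v := by
      ext w
      simp only [Finset.mem_filter, Finset.mem_univ, true_and, Finset.mem_erase]
      tauto
    rw [hsub, Finset.card_erase_of_mem (by simp)]
    have hline : (Finset.univ.filter (fun w : Fin r × Fin p => icpt S ℓ w = icpt S ℓ v)).card
        ≤ r := by
      have := Finset.card_le_card_of_injOn (fun w : Fin r × Fin p => w.1)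
        (fun a _ => Finset.mem_univ _)
        (s := Finset.univ.filter (fun w : Fin r × Fin p => icpt S ℓ w = icpt S ℓ v))
        (t := (Finset.univ : Finset (Fin r)))
        ?_
      · simpa using this
      · intro a ha b hb hab
        simp only [Finset.coe_filter, Set.mem_setOf_eq] at ha hb
        exact cell_eq_of_row S ℓ (ha.2.trans hb.2.symm) hab
    omega
  calc (Rset S v ℓ).card ≤ _ + 1 := Finset.card_insert_le _ _
    _ ≤ (Finset.univ.filter (fun w : Fin r × Fin p => icpt S ℓ w = icpt S ℓ v ∧ w ≠ v)).card + 1 :=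
        by gcongr; exact Finset.card_image_le
    _ ≤ r := by omega

lemma Rset_recovers (S : Fin k → ℕ) (hSlt : ∀ l, S l < p) [NeZero p]
    (v : Fin r × Fin p) (ℓ : Fin k) (x x' : Fin r × Fin p → ZMod 2)
    (h : ∀ c ∈ Rset S v ℓ, arrayEncode r p k S x c = arrayEncode r p k S x' c) :
    x v = x' v := by
  set D := Finset.univ.filter (fun w : Fin r × Fin p => icpt S ℓ w = icpt S ℓ v) with hD
  have hv : v ∈ D := by simp [hD]
  have hpar : ∑ w ∈ D, x w = ∑ w ∈ D, x' w := by
    have := h (Sum.inr (ℓ, ⟨(icpt S ℓ v).val, ZMod.val_lt _⟩)) (by rw [mem_Rset]; left; rfl)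
    simpa only [arrayEncode, filter_diag_eq S hSlt ℓ v] using this
  have hDe : D.erase v = Finset.univ.filter
      (fun w : Fin r × Fin p => icpt S ℓ w = icpt S ℓ v ∧ w ≠ v) := by
    ext w
    simp only [hD, Finset.mem_filter, Finset.mem_univ, true_and, Finset.mem_erase]
    tauto
  have hcells : ∑ w ∈ D.erase v, x w = ∑ w ∈ D.erase v, x' w := by
    refine Finset.sum_congr rfl (fun w hw => ?_)
    rw [hDe] at hw
    simp only [Finset.mem_filter, Finset.mem_univ, true_and] at hw
    have := h (Sum.inl w) (by rw [mem_Rset]; right; exact ⟨w, rfl, hw⟩)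
    simpa only [arrayEncode] using this
  have e1 := Finset.add_sum_erase D x hv
  have e2 := Finset.add_sum_erase D x' hv
  have : x v + ∑ w ∈ D.erase v, x w = x' v + ∑ w ∈ D.erase v, x w := by
    rw [e1, hcells, e2, hpar]
  exact add_right_cancel this

def firstI (req : Fin k → Fin r × Fin p) (a : Fin k) : Prop := ∀ b, b < a → req b ≠ req a

noncomputable def fo (req : Fin k → Fin r × Fin p) (a : Fin k) : Fin k :=
  (Finset.univ.filter (fun b => req b = req a)).min' ⟨a, by simp⟩

lemma fo_req (req : Fin k → Fin r × Fin p) (a : Fin k) : req (fo req a) = req a := by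
  have := Finset.min'_mem (Finset.univ.filter (fun b => req b = req a)) ⟨a, by simp⟩
  simpa [fo] using this

lemma fo_first (req : Fin k → Fin r × Fin p) (a : Fin k) : firstI req (fo req a) := by
  intro b hb hbeq
  have hbmem : b ∈ Finset.univ.filter (fun b => req b = req a) := by
    simp [hbeq.trans (fo_req req a)]
  exact absurd (Finset.min'_le _ b hbmem) (not_le.2 hb)

noncomputable def g2f (S : Fin k → ℕ) (req : Fin k → Fin r × Fin p) (A c : Fin k) : Fin k :=
  if h : ∃ ℓ', icpt S ℓ' (req A) = icpt S ℓ' (req c) then h.choose else A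

lemma g2f_spec {S : Fin k → ℕ} {req : Fin k → Fin r × Fin p} {A c : Fin k}
    (h : ∃ ℓ', icpt S ℓ' (req A) = icpt S ℓ' (req c)) :
    icpt S (g2f S req A c) (req A) = icpt S (g2f S req A c) (req c) := by
  rw [g2f, dif_pos h]; exact h.choose_spec

noncomputable def g3f (S : Fin k → ℕ) (req : Fin k → Fin r × Fin p) (σ : Fin k → Fin k)
    (A b : Fin k) : Fin k :=
  if h : ∃ ℓ', ∃ w : Fin r × Fin p, icpt S ℓ' w = icpt S ℓ' (req A) ∧
      icpt S (σ b) w = icpt S (σ b) (req b) ∧ w ≠ req A ∧ w ≠ req b then h.choose else A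

lemma g3f_spec {S : Fin k → ℕ} {req : Fin k → Fin r × Fin p} {σ : Fin k → Fin k} {A b : Fin k}
    (h : ∃ ℓ', ∃ w : Fin r × Fin p, icpt S ℓ' w = icpt S ℓ' (req A) ∧
      icpt S (σ b) w = icpt S (σ b) (req b) ∧ w ≠ req A ∧ w ≠ req b) :
    ∃ w : Fin r × Fin p, icpt S (g3f S req σ A b) w = icpt S (g3f S req σ A b) (req A) ∧
      icpt S (σ b) w = icpt S (σ b) (req b) ∧ w ≠ req A ∧ w ≠ req b := by
  rw [g3f, dif_pos h]; exact h.choose_spec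

lemma step (hp : p.Prime) (hrp : r ≤ p) {S : Fin k → ℕ}
    (hSinj : Function.Injective S) (hSlt : ∀ l, S l < p)
    (hAP : NoWeightedAP r p (Set.range S))
    (req : Fin k → Fin r × Fin p) (σ : Fin k → Fin k) (A : Fin k) (hfA : ¬ firstI req A)
    (hIH : ∀ b, b < A → ¬ firstI req b → ∀ c, req c ≠ req b →
      icpt S (σ b) (req c) ≠ icpt S (σ b) (req b)) :
    ∃ ℓ : Fin k,
      (∀ c, req c ≠ req A → icpt S ℓ (req c) ≠ icpt S ℓ (req A)) ∧
      (∀ b, b < A → ¬ firstI req b → req b = req A → σ b ≠ ℓ) ∧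
      (∀ b, b < A → ¬ firstI req b → req b ≠ req A → ∀ w : Fin r × Fin p,
        ¬ (icpt S ℓ w = icpt S ℓ (req A) ∧ icpt S (σ b) w = icpt S (σ b) (req b))) := by
  haveI : NeZero p := ⟨hp.ne_zero⟩
  set T13 := Finset.univ.filter (fun b : Fin k => b < A ∧ ¬ firstI req b) with hT13
  set T1 := T13.filter (fun b => req b = req A) with hT1
  set T3 := T13.filter (fun b => ¬ (req b = req A)) with hT3
  set T2 := Finset.univ.filter (fun b : Fin k => firstI req b ∧ req b ≠ req A) with hT2
  set bad := T1.image σ ∪ (T2.image (g2f S req A) ∪ T3.image (g3f S req σ A)) with hbad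
  have hbadcard : bad.card < k := by
    have h13 : T1.card + T3.card = T13.card :=
      Finset.card_filter_add_card_filter_not _
    have hNsub : T13 ⊆ (Finset.univ.filter (fun b : Fin k => ¬ firstI req b)).erase A := by
      intro b hb
      simp only [hT13, Finset.mem_filter, Finset.mem_univ, true_and] at hb
      simp only [Finset.mem_erase, Finset.mem_filter, Finset.mem_univ, true_and]
      exact ⟨hb.1.ne, hb.2⟩
    have hAmem : A ∈ Finset.univ.filter (fun b : Fin k => ¬ firstI req b) := by simp [hfA]
    have hfomem : fo req A ∈ Finset.univ.filter (fun b : Fin k => firstI req b) := by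
      simp [fo_first]
    have hT2sub : T2 ⊆ (Finset.univ.filter (fun b : Fin k => firstI req b)).erase (fo req A) := by
      intro b hb
      simp only [hT2, Finset.mem_filter, Finset.mem_univ, true_and] at hb
      simp only [Finset.mem_erase, Finset.mem_filter, Finset.mem_univ, true_and]
      refine ⟨fun h => ?_, hb.1⟩
      exact hb.2 (by rw [h]; exact fo_req req A)
    have hsplit : (Finset.univ.filter (fun b : Fin k => firstI req b)).card +
        (Finset.univ.filter (fun b : Fin k => ¬ firstI req b)).card = k := by
      rw [Finset.card_filter_add_card_filter_not]
      simp
    have c1 : T13.card ≤ (Finset.univ.filter (fun b : Fin k => ¬ firstI req b)).card - 1 := by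
      have := Finset.card_le_card hNsub
      rwa [Finset.card_erase_of_mem hAmem] at this
    have c2 : T2.card ≤ (Finset.univ.filter (fun b : Fin k => firstI req b)).card - 1 := by
      have := Finset.card_le_card hT2sub
      rwa [Finset.card_erase_of_mem hfomem] at this
    have cN : 1 ≤ (Finset.univ.filter (fun b : Fin k => ¬ firstI req b)).card :=
      Finset.card_pos.2 ⟨A, hAmem⟩
    have cF : 1 ≤ (Finset.univ.filter (fun b : Fin k => firstI req b)).card :=
      Finset.card_pos.2 ⟨fo req A, hfomem⟩
    have hb1 : bad.card ≤ T1.card + (T2.card + T3.card) :=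
      le_trans (Finset.card_union_le _ _) (Nat.add_le_add Finset.card_image_le
        (le_trans (Finset.card_union_le _ _)
          (Nat.add_le_add Finset.card_image_le Finset.card_image_le)))
    omega
  have hex : ∃ ℓ : Fin k, ℓ ∉ bad := by
    by_contra h
    push_neg at h
    have : (Finset.univ : Finset (Fin k)) ⊆ bad := fun ℓ _ => h ℓ
    have := Finset.card_le_card this
    simp only [Finset.card_univ, Fintype.card_fin] at this
    omega
  obtain ⟨ℓ, hℓ⟩ := hex
  have hGA : ∀ c, req c ≠ req A → icpt S ℓ (req c) ≠ icpt S ℓ (req A) := by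
    intro c hc hcol
    set c0 := fo req c with hc0
    have hc0r : req c0 = req c := fo_req req c
    have hc0mem : c0 ∈ T2 := by
      simp only [hT2, Finset.mem_filter, Finset.mem_univ, true_and]
      exact ⟨fo_first req c, by rw [hc0r]; exact hc⟩
    have hex2 : ∃ ℓ', icpt S ℓ' (req A) = icpt S ℓ' (req c0) := ⟨ℓ, by rw [hc0r]; exact hcol.symm⟩
    have hne : req A ≠ req c0 := by rw [hc0r]; exact fun h => hc h.symm
    have heq : g2f S req A c0 = ℓ :=
      slope_unique hp hrp hSinj hSlt hne (g2f_spec hex2) (by rw [hc0r]; exact hcol.symm)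
    exact hℓ (by
      rw [hbad]
      refine Finset.mem_union_right _ (Finset.mem_union_left _ ?_)
      exact Finset.mem_image.2 ⟨c0, hc0mem, heq⟩)
  refine ⟨ℓ, hGA, ?_, ?_⟩
  · intro b hb hfb hreq heq
    refine hℓ (by
      rw [hbad]
      refine Finset.mem_union_left _ ?_
      refine Finset.mem_image.2 ⟨b, ?_, heq⟩
      simp only [hT1, hT13, Finset.mem_filter, Finset.mem_univ, true_and]
      exact ⟨⟨hb, hfb⟩, hreq⟩)
  · intro b hb hfb hreq w ⟨hw1, hw2⟩
    by_cases hwb : w = req b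
    · exact hGA b hreq (by rw [← hwb]; exact hw1) 
    by_cases hwA : w = req A
    · exact hIH b hb hfb A (fun h => hreq h.symm) (by rw [← hwA]; exact hw2) 
    have hex3 : ∃ ℓ', ∃ w' : Fin r × Fin p, icpt S ℓ' w' = icpt S ℓ' (req A) ∧
        icpt S (σ b) w' = icpt S (σ b) (req b) ∧ w' ≠ req A ∧ w' ≠ req b :=
      ⟨ℓ, w, hw1, hw2, hwA, hwb⟩
    obtain ⟨w', s1, s2, s3, s4⟩ := g3f_spec hex3
    have heq : g3f S req σ A b = ℓ := by
      by_cases hww : w' = w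
      · exact slope_unique hp hrp hSinj hSlt s3 s1 (by rw [hww]; exact hw1)
      · by_contra hne'
        refine LemX hp hrp hSinj hAP (hw2.trans s2.symm) hw1.symm s1.symm ?_
          (fun h => hww h.symm) (fun h => hne' h.symm)
        rw [hw2]
        exact hIH b hb hfb A (fun h => hreq h.symm)
    exact hℓ (by
      rw [hbad]
      refine Finset.mem_union_right _ (Finset.mem_union_right _ ?_)
      refine Finset.mem_image.2 ⟨b, ?_, heq⟩
      simp only [hT3, hT13, Finset.mem_filter, Finset.mem_univ, true_and]
      exact ⟨⟨hb, hfb⟩, hreq⟩)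

end Stmt15Aux

/-- Let `p` be prime, `0 < r ≤ p`, and `S` a set of `k` distinct slopes in
`[p]` (given by the injective enumeration `S : Fin k → ℕ`) containing no `r`-weighted
arithmetic progression modulo `p`.  Then the array code `C(r,p,S)` — of dimension `rp` and
length `rp + kp` — is a binary `(r,k)`-batch code: every multiset request of `k` information
coordinates can be answered by pairwise disjoint recovering sets of size at most `r`. -/
theorem stmt15 (p r k : ℕ) (hp : p.Prime) (hr : 0 < r) (hrp : r ≤ p)
    (S : Fin k → ℕ) (hSinj : Function.Injective S) (hSlt : ∀ l, S l < p)
    (hAP : NoWeightedAP r p (Set.range S)) :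
    ∀ req : Fin k → Fin r × Fin p,
      ∃ R : Fin k → Finset ((Fin r × Fin p) ⊕ (Fin k × Fin p)),
        (∀ a b, a ≠ b → Disjoint (R a) (R b)) ∧
        ∀ a, (R a).card ≤ r ∧
          ∀ x x' : Fin r × Fin p → ZMod 2,
            (∀ c ∈ R a, arrayEncode r p k S x c = arrayEncode r p k S x' c) →
            x (req a) = x' (req a) := by
  intro req
  haveI : NeZero p := ⟨hp.ne_zero⟩
  classical
  -- Inductively choose slopes for all non-first occurrences.
  have key : ∀ n : ℕ, ∃ σ : Fin k → Fin k, ∀ a : Fin k, (a : ℕ) < n → ¬ firstI req a →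
      ((∀ c, req c ≠ req a → icpt S (σ a) (req c) ≠ icpt S (σ a) (req a)) ∧
       (∀ b, b < a → ¬ firstI req b → req b = req a → σ b ≠ σ a) ∧
       (∀ b, b < a → ¬ firstI req b → req b ≠ req a → ∀ w : Fin r × Fin p,
         ¬ (icpt S (σ a) w = icpt S (σ a) (req a) ∧ icpt S (σ b) w = icpt S (σ b) (req b)))) := by
    intro n
    induction n with
    | zero => exact ⟨fun a => a, fun a ha => absurd ha (Nat.not_lt_zero _)⟩
    | succ n ih =>
      obtain ⟨σ, hσ⟩ := ih
      by_cases hnk : n < k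
      · set A : Fin k := ⟨n, hnk⟩ with hA
        have hAval : (A : ℕ) = n := rfl
        by_cases hfA : firstI req A
        · refine ⟨σ, fun a ha hfa => ?_⟩
          rcases Nat.lt_succ_iff_lt_or_eq.1 ha with h | h
          · exact hσ a h hfa
          · have : a = A := Fin.ext h
            rw [this] at hfa
            exact absurd hfA hfa
        · have hIH : ∀ b, b < A → ¬ firstI req b → ∀ c, req c ≠ req b →
              icpt S (σ b) (req c) ≠ icpt S (σ b) (req b) := by
            intro b hb hfb
            exact (hσ b hb hfb).1
          obtain ⟨ℓ, hG1, hG2, hG3⟩ := step hp hrp hSinj hSlt hAP req σ A hfA hIH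
          refine ⟨Function.update σ A ℓ, fun a ha hfa => ?_⟩
          rcases Nat.lt_succ_iff_lt_or_eq.1 ha with h | h
          · have haA : a ≠ A := fun e => by rw [e, hAval] at h; omega
            obtain ⟨p1, p2, p3⟩ := hσ a h hfa
            refine ⟨?_, ?_, ?_⟩
            · rw [Function.update_of_ne haA]
              exact p1
            · intro b hb hfb he
              have hbA : b ≠ A := fun e => by
                have : (b : ℕ) < (a : ℕ) := hb
                rw [e, hAval] at this; omega
              rw [Function.update_of_ne hbA, Function.update_of_ne haA]
              exact p2 b hb hfb he
            · intro b hb hfb he w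
              have hbA : b ≠ A := fun e => by
                have : (b : ℕ) < (a : ℕ) := hb
                rw [e, hAval] at this; omega
              rw [Function.update_of_ne hbA, Function.update_of_ne haA]
              exact p3 b hb hfb he w
          · have haA : a = A := Fin.ext h
            subst haA
            refine ⟨?_, ?_, ?_⟩
            · rw [Function.update_self]
              exact hG1
            · intro b hb hfb he
              rw [Function.update_self, Function.update_of_ne (ne_of_lt hb)]
              exact hG2 b hb hfb he
            · intro b hb hfb he w
              rw [Function.update_self, Function.update_of_ne (ne_of_lt hb)]
              exact hG3 b hb hfb he w
      · refine ⟨σ, fun a ha hfa => hσ a ?_ hfa⟩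
        have := a.2
        omega
  obtain ⟨σ, hσ⟩ := key k
  have hGood := fun (a : Fin k) => hσ a a.2
  set R : Fin k → Finset ((Fin r × Fin p) ⊕ (Fin k × Fin p)) := fun a =>
    if firstI req a then {Sum.inl (req a)} else Rset S (req a) (σ a) with hR
  -- helper: distinct slopes for equal points
  have hslopes : ∀ a b : Fin k, a ≠ b → ¬ firstI req a → ¬ firstI req b → req a = req b →
      σ a ≠ σ b := by
    intro a b hab hfa hfb hre
    rcases lt_trichotomy a b with h | h | h
    · exact fun e => (hGood b hfb).2.1 a h hfa hre e
    · exact absurd h hab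
    · exact fun e => ((hGood a hfa).2.1 b h hfb hre.symm e.symm).elim
  refine ⟨R, ?_, ?_⟩
  · intro a b hab
    rw [Finset.disjoint_left]
    intro c hca hcb
    by_cases hfa : firstI req a <;> by_cases hfb : firstI req b
    · rw [hR] at hca hcb
      simp only [if_pos hfa, Finset.mem_singleton] at hca
      simp only [if_pos hfb, Finset.mem_singleton] at hcb
      have hre : req a = req b := Sum.inl.inj (hca.symm.trans hcb)
      rcases lt_trichotomy a b with h | h | h
      · exact hfb a h hre
      · exact hab h
      · exact hfa b h hre.symm
    · rw [hR] at hca hcb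
      simp only [if_pos hfa, Finset.mem_singleton] at hca
      simp only [if_neg hfb] at hcb
      rw [hca, mem_Rset] at hcb
      rcases hcb with h | ⟨w, hw, hline, hwne⟩
      · exact Sum.inl_ne_inr h
      · have hwa : w = req a := (Sum.inl.inj hw).symm
        by_cases hre : req a = req b
        · exact hwne (hwa.trans hre)
        · exact (hGood b hfb).1 a hre (by rw [← hwa]; exact hline) 
    · rw [hR] at hca hcb
      simp only [if_pos hfb, Finset.mem_singleton] at hcb
      simp only [if_neg hfa] at hca
      rw [hcb, mem_Rset] at hca
      rcases hca with h | ⟨w, hw, hline, hwne⟩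
      · exact Sum.inl_ne_inr h
      · have hwb : w = req b := (Sum.inl.inj hw).symm
        by_cases hre : req b = req a
        · exact hwne (hwb.trans hre)
        · exact (hGood a hfa).1 b hre (by rw [hwb] at hline; exact hline)
    · rw [hR] at hca hcb
      simp only [if_neg hfa] at hca
      simp only [if_neg hfb] at hcb
      rw [mem_Rset] at hca hcb
      rcases hca with h1 | ⟨w, hw, hline, hwne⟩
      · rcases hcb with h2 | ⟨w', hw', hline', hwne'⟩
        · -- both parity coordinates
          rw [h1] at h2
          have hpair := Sum.inr.inj h2
          have hσeq : σ a = σ b := congrArg Prod.fst hpair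
          have htval : (icpt S (σ a) (req a)).val = (icpt S (σ b) (req b)).val := by
            have := congrArg Prod.snd hpair
            exact congrArg Fin.val this
          have hticpt : icpt S (σ a) (req a) = icpt S (σ b) (req b) :=
            ZMod.natCast_rightInverse.injective htval
          by_cases hre : req a = req b
          · exact hslopes a b hab hfa hfb hre hσeq
          · rw [hσeq] at hticpt
            exact (hGood b hfb).1 a hre hticpt
        · rw [h1] at hw'
          exact Sum.inr_ne_inl hw'
      · rcases hcb with h2 | ⟨w', hw', hline', hwne'⟩
        · rw [h2] at hw
          exact Sum.inr_ne_inl hw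
        · -- both info cells
          have hww : w = w' := Sum.inl.inj (hw.symm.trans hw')
          subst hww
          by_cases hre : req a = req b
          · have hσne : σ a ≠ σ b := hslopes a b hab hfa hfb hre
            have hS : ((S (σ a) : ℕ) : ZMod p) ≠ ((S (σ b) : ℕ) : ZMod p) :=
              fun h => hσne (slopecast_inj hSinj hSlt h)
            have : w = req a := line_inter hp hrp S hS hline (by rw [hre]; exact hline')
            exact hwne this
          · rcases lt_trichotomy a b with h | h | h
            · exact (hGood b hfb).2.2 a h hfa hre w ⟨hline', hline⟩
            · exact hab h
            · exact (hGood a hfa).2.2 b h hfb (fun e => hre e.symm) w ⟨hline, hline'⟩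
  · intro a
    constructor
    · rw [hR]
      by_cases hfa : firstI req a
      · simp only [if_pos hfa, Finset.card_singleton]
        omega
      · simp only [if_neg hfa]
        exact Rset_card S hrp hr (req a) (σ a)
    · intro x x' hx
      by_cases hfa : firstI req a
      · have := hx (Sum.inl (req a)) (by rw [hR]; simp [if_pos hfa])
        simpa only [arrayEncode] using this
      · refine Rset_recovers S hSlt (req a) (σ a) x x' (fun c hc => hx c ?_)
        rw [hR]
        simp only [if_neg hfa]
        exact hc
end
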